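/- arXiv:1703.10374 — 4 statements merged into one kernel-verified Lean document; each statement's English description precedes it below -/
import Mathlib

section
/- A metrizable space (Y, π_Y) over B0 is an ANR_{B0}-space if and only if Y is an ANE_{B0}-space. -/
open Set Topology TopologicalSpace unitInterval

universe u

/-- `f` is a fiber preserving (f.p.) map from `(X, πX)` to `(Y, πY)` over `B0`. -/
def IsFPMap {B0 X Y : Type u} [TopologicalSpace B0] [TopologicalSpace X] [TopologicalSpace Y]
    (πX : X → B0) (πY : Y → B0) (f : X → Y) : Prop :=
  Continuous f ∧ ∀ x, πY (f x) = πX x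

/-- Two f.p. maps are f.p. homotopic (homotopic over `B0`). -/
def FPHomotopic {B0 X Y : Type u} [TopologicalSpace B0] [TopologicalSpace X] [TopologicalSpace Y]
    (πX : X → B0) (πY : Y → B0) (f g : X → Y) : Prop :=
  ∃ H : X × unitInterval → Y, Continuous H ∧
    (∀ x, H (x, 0) = f x) ∧ (∀ x, H (x, 1) = g x) ∧
    ∀ x t, πY (H (x, t)) = πX x

/-- A metrizable space `(Y, πY)` over `B0` is an absolute neighbourhood retract over `B0`:
for every closed f.p. embedding into a metrizable space over `B0` there is a neighbourhood of the
image and an f.p. retraction of that neighbourhood onto the image. -/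
def IsFiberANR (B0 : Type u) [TopologicalSpace B0] (Y : Type u) [TopologicalSpace Y]
    (πY : Y → B0) : Prop :=
  MetrizableSpace Y ∧ Continuous πY ∧
  ∀ (X : Type u) (_ : TopologicalSpace X), MetrizableSpace X →
    ∀ πX : X → B0, Continuous πX →
    ∀ i : Y → X, IsClosedEmbedding i → (∀ y, πX (i y) = πY y) →
    ∃ U : Set X, U ∈ nhdsSet (Set.range i) ∧
    ∃ r : U → X, Continuous r ∧ (∀ u : U, r u ∈ Set.range i) ∧
      (∀ u : U, πX (r u) = πX u) ∧ ∀ u : U, (u : X) ∈ Set.range i → r u = u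

/-- A metrizable space `(Y, πY)` over `B0` is an absolute neighbourhood extensor over `B0`. -/
def IsFiberANE (B0 : Type u) [TopologicalSpace B0] (Y : Type u) [TopologicalSpace Y]
    (πY : Y → B0) : Prop :=
  MetrizableSpace Y ∧ Continuous πY ∧
  ∀ (X : Type u) (_ : TopologicalSpace X), MetrizableSpace X →
    ∀ πX : X → B0, Continuous πX →
    ∀ A : Set X, IsClosed A →
    ∀ f : A → Y, Continuous f → (∀ a : A, πY (f a) = πX a) →
    ∃ U : Set X, U ∈ nhdsSet A ∧
    ∃ g : U → Y, Continuous g ∧ (∀ u : U, πY (g u) = πX u) ∧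
      ∀ (a : X) (ha : a ∈ A) (hu : a ∈ U), g ⟨a, hu⟩ = f ⟨a, ha⟩

/-- An open cover of a topological space. -/
def IsOpenCover {Y : Type u} [TopologicalSpace Y] (𝒰 : Set (Set Y)) : Prop :=
  (∀ V ∈ 𝒰, IsOpen V) ∧ ⋃₀ 𝒰 = Set.univ

/-- Two maps are `𝒰`-near. -/
def UNear {X Y : Type u} (𝒰 : Set (Set Y)) (f g : X → Y) : Prop :=
  ∀ x, ∃ V ∈ 𝒰, f x ∈ V ∧ g x ∈ V

/-- The (topological) weight of a space: the least cardinality of a basis of its topology. -/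
noncomputable def tweight (X : Type u) [TopologicalSpace X] : Cardinal.{u} :=
  sInf {c | ∃ B : Set (Set X), IsTopologicalBasis B ∧ Cardinal.mk B = c}

/-- An inverse system in `Top_{B0}`: a directed set of indices, spaces over `B0` and f.p.
bonding maps. -/
structure FibInvSys (B0 : Type u) [TopologicalSpace B0] : Type (u + 1) where
  Idx : Type u
  le : Idx → Idx → Prop
  le_refl : ∀ a, le a a
  le_trans : ∀ a b c, le a b → le b c → le a c
  directed : ∀ a b, ∃ c, le a c ∧ le b c
  obj : Idx → Type u
  topInst : ∀ a, TopologicalSpace (obj a)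
  proj : ∀ a, obj a → B0
  proj_cont : ∀ a, @Continuous _ _ (topInst a) _ (proj a)
  bond : ∀ a a', le a a' → obj a' → obj a
  bond_cont : ∀ a a' (h : le a a'), @Continuous _ _ (topInst a') (topInst a) (bond a a' h)
  bond_fp : ∀ a a' (h : le a a') (x : obj a'), proj a (bond a a' h x) = proj a' x
  bond_id : ∀ a (x : obj a), bond a a (le_refl a) x = x
  bond_comp : ∀ a a' a'' (h : le a a') (h' : le a' a'') (x : obj a''),
    bond a a' h (bond a' a'' h' x) = bond a a'' (le_trans a a' a'' h h') x

attribute [instance] FibInvSys.topInst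

/-- A morphism from a space `(X, πX)` over `B0` to an inverse system in `Top_{B0}`. -/
structure FibMapToSys {B0 : Type u} [TopologicalSpace B0] (X : Type u) [TopologicalSpace X]
    (πX : X → B0) (S : FibInvSys B0) where
  maps : ∀ a : S.Idx, X → S.obj a
  cont : ∀ a, Continuous (maps a)
  fp : ∀ a x, S.proj a (maps a x) = πX x
  comm : ∀ a a' (h : S.le a a') (x : X), S.bond a a' h (maps a' x) = maps a x

section Conditions

variable {B0 : Type u} [TopologicalSpace B0] (X : Type u) [TopologicalSpace X]
  (πX : X → B0) (S : FibInvSys B0)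

/-- Condition (R1) of a resolution over `B0`. -/
def CondR1 (p : FibMapToSys X πX S) : Prop :=
  ∀ (P : Type u) (_ : TopologicalSpace P) (πP : P → B0), IsFiberANR B0 P πP →
    ∀ 𝒰 : Set (Set P), IsOpenCover 𝒰 →
    ∀ h : X → P, IsFPMap πX πP h →
    ∃ (a : S.Idx) (f : S.obj a → P), IsFPMap (S.proj a) πP f ∧
      UNear 𝒰 h fun x => f (p.maps a x)

/-- Condition (R2) of a resolution over `B0`. -/
def CondR2 (p : FibMapToSys X πX S) : Prop :=
  ∀ (P : Type u) (_ : TopologicalSpace P) (πP : P → B0), IsFiberANR B0 P πP →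
    ∀ 𝒰 : Set (Set P), IsOpenCover 𝒰 →
    ∃ 𝒰' : Set (Set P), IsOpenCover 𝒰' ∧
      ∀ (a : S.Idx) (f f' : S.obj a → P), IsFPMap (S.proj a) πP f → IsFPMap (S.proj a) πP f' →
        UNear 𝒰' (fun x => f (p.maps a x)) (fun x => f' (p.maps a x)) →
        ∃ (a' : S.Idx) (h : S.le a a'),
          UNear 𝒰 (fun y => f (S.bond a a' h y)) fun y => f' (S.bond a a' h y)

/-- `p` is a resolution over `B0`. -/
def IsFibResolution (p : FibMapToSys X πX S) : Prop :=
  CondR1 X πX S p ∧ CondR2 X πX S p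

/-- Condition (E1) of an expansion over `B0`. -/
def CondE1 (p : FibMapToSys X πX S) : Prop :=
  ∀ (P : Type u) (_ : TopologicalSpace P) (πP : P → B0), IsFiberANR B0 P πP →
    ∀ f : X → P, IsFPMap πX πP f →
    ∃ (a : S.Idx) (h : S.obj a → P), IsFPMap (S.proj a) πP h ∧
      FPHomotopic πX πP (fun x => h (p.maps a x)) f

/-- Condition (E2) of an expansion over `B0`. -/
def CondE2 (p : FibMapToSys X πX S) : Prop :=
  ∀ (P : Type u) (_ : TopologicalSpace P) (πP : P → B0), IsFiberANR B0 P πP →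
    ∀ (a : S.Idx) (f f' : S.obj a → P), IsFPMap (S.proj a) πP f → IsFPMap (S.proj a) πP f' →
      FPHomotopic πX πP (fun x => f (p.maps a x)) (fun x => f' (p.maps a x)) →
      ∃ (a' : S.Idx) (h : S.le a a'),
        FPHomotopic (S.proj a') πP (fun y => f (S.bond a a' h y)) fun y => f' (S.bond a a' h y)

/-- Two f.p. homotopies `S, T : X × I → P` are f.p. homotopic rel `X × ∂I`. -/
def FPHomotopicRelEnds {P : Type u} [TopologicalSpace P] (πP : P → B0)
    (S T : X × unitInterval → P) : Prop :=
  ∃ G : (X × unitInterval) × unitInterval → P, Continuous G ∧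
    (∀ z, G (z, 0) = S z) ∧ (∀ z, G (z, 1) = T z) ∧
    (∀ z s, πP (G (z, s)) = πX z.1) ∧
    (∀ x s, G ((x, 0), s) = S (x, 0)) ∧ ∀ x s, G ((x, 1), s) = S (x, 1)

/-- Condition (SE2) of a strong expansion over `B0`. -/
def CondSE2 (p : FibMapToSys X πX S) : Prop :=
  ∀ (P : Type u) (_ : TopologicalSpace P) (πP : P → B0), IsFiberANR B0 P πP →
    ∀ (a : S.Idx) (f0 f1 : S.obj a → P), IsFPMap (S.proj a) πP f0 → IsFPMap (S.proj a) πP f1 →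
    ∀ Sh : X × unitInterval → P, Continuous Sh → (∀ x t, πP (Sh (x, t)) = πX x) →
      (∀ x, Sh (x, 0) = f0 (p.maps a x)) → (∀ x, Sh (x, 1) = f1 (p.maps a x)) →
      ∃ (a' : S.Idx) (h : S.le a a') (H : S.obj a' × unitInterval → P),
        Continuous H ∧ (∀ z t, πP (H (z, t)) = S.proj a' z) ∧
        (∀ z, H (z, 0) = f0 (S.bond a a' h z)) ∧
        (∀ z, H (z, 1) = f1 (S.bond a a' h z)) ∧
        FPHomotopicRelEnds X πX πP Sh fun zt => H (p.maps a' zt.1, zt.2)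

/-- `p` is a strong expansion over `B0`. -/
def IsFibStrongExpansion (p : FibMapToSys X πX S) : Prop :=
  CondE1 X πX S p ∧ CondSE2 X πX S p

end Conditions

section Aux
open Metric
universe v w

theorem dugundji_extension {X : Type v} [MetricSpace X] {E : Type w} [NormedAddCommGroup E]
    [NormedSpace ℝ E] {A : Set X} (hA : IsClosed A) (hne : A.Nonempty) (f : A → E)
    (hf : Continuous f) :
    ∃ F : X → E, Continuous F ∧ (∀ a (ha : a ∈ A), F a = f ⟨a, ha⟩) ∧
      ∀ x, F x ∈ convexHull ℝ (Set.range f) := by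
  classical
  have hr : ∀ i : ↥(Aᶜ), 0 < infDist (i : X) A := fun i =>
    (hA.notMem_iff_infDist_pos hne).1 i.2
  set T := ↥(Aᶜ)
  let U : T → Set T := fun i => Subtype.val ⁻¹' ball (i : X) (infDist (i : X) A / 2)
  have hUo : ∀ i, IsOpen (U i) := fun i => isOpen_ball.preimage continuous_subtype_val
  have hUc : (univ : Set T) ⊆ ⋃ i, U i := fun z _ =>
    mem_iUnion.2 ⟨z, by simp only [U, mem_preimage, mem_ball, dist_self]; linarith [hr z]⟩
  obtain ⟨ρ, hρ⟩ := PartitionOfUnity.exists_isSubordinate isClosed_univ U hUo hUc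
  have hpick : ∀ i : T, ∃ a ∈ A, dist (i : X) a < 2 * infDist (i : X) A := fun i =>
    (infDist_lt_iff hne).1 (by linarith [hr i])
  choose a ha hd using hpick
  set c : T → E := fun i => f ⟨a i, ha i⟩ with hc
  set g : T → E := fun z => ∑ᶠ i, ρ i z • c i with hg
  have hgc : Continuous g := hρ.continuous_finsum_smul hUo fun i => continuousOn_const
  have hgsum : ∀ z : T, g z = ∑ i ∈ ρ.finsupport z, ρ i z • c i := fun z =>
    (ρ.sum_finsupport_smul_eq_finsum fun i _ => c i).symm
  set F : X → E := fun x => if h : x ∈ A then f ⟨x, h⟩ else g ⟨x, h⟩ with hF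
  have hFA : ∀ a (ha : a ∈ A), F a = f ⟨a, ha⟩ := fun x hx => dif_pos hx
  have hFg : ∀ (x : X) (hx : x ∉ A), F x = g ⟨x, hx⟩ := fun x hx => dif_neg hx
  -- key estimate
  have key : ∀ (z i : T), ρ i z ≠ 0 → dist (a i) (z : X) < 5 * infDist (z : X) A := by
    intro z i hiz
    have hzU : z ∈ U i := hρ i (subset_closure (Function.mem_support.2 hiz))
    have h1 : dist (z : X) (i : X) < infDist (i : X) A / 2 := hzU
    have h2 : infDist (i : X) A ≤ infDist (z : X) A + dist (i : X) (z : X) :=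
      infDist_le_infDist_add_dist
    rw [dist_comm] at h1
    have h3 : infDist (i : X) A < 2 * infDist (z : X) A := by linarith
    calc dist (a i) (z : X) ≤ dist (a i) (i : X) + dist (i : X) (z : X) := dist_triangle _ _ _
      _ < 2 * infDist (i : X) A + infDist (i : X) A / 2 := by
          rw [dist_comm (a i)]; linarith [hd i]
      _ < 5 * infDist (z : X) A := by linarith
  have hsum1 : ∀ z : T, ∑ i ∈ ρ.finsupport z, ρ i z = 1 := fun z => ρ.sum_finsupport (mem_univ z)
  have hhull : ∀ z : T, g z ∈ convexHull ℝ (Set.range f) := by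
    intro z
    rw [hgsum z, ← Finset.centerMass_eq_of_sum_1 _ c (hsum1 z)]
    exact Finset.centerMass_mem_convexHull _ (fun i _ => ρ.nonneg i z)
      (by rw [hsum1 z]; norm_num) fun i _ => ⟨_, rfl⟩
  refine ⟨F, ?_, hFA, ?_⟩
  · rw [continuous_iff_continuousAt]
    intro x
    by_cases hx : x ∈ A
    · rw [Metric.continuousAt_iff]
      intro ε hε
      obtain ⟨δ₁, hδ₁, hδf⟩ := Metric.continuousAt_iff.1 (hf.continuousAt (x := ⟨x, hx⟩))
        (ε / 2) (by linarith)
      refine ⟨δ₁ / 6, by linarith, fun {y} hy => ?_⟩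
      by_cases hyA : y ∈ A
      · rw [hFA y hyA, hFA x hx]
        have : dist (⟨y, hyA⟩ : A) ⟨x, hx⟩ < δ₁ := by
          rw [Subtype.dist_eq]; dsimp only; linarith
        linarith [hδf this]
      · rw [hFA x hx, hFg y hyA]
        set z : T := ⟨y, hyA⟩
        have hdz : infDist (z : X) A ≤ dist y x := infDist_le_dist_of_mem hx
        have hci : ∀ i ∈ ρ.finsupport z, dist (c i) (f ⟨x, hx⟩) < ε / 2 := by
          intro i hi
          have hne0 : ρ i z ≠ 0 := by
            have := (ρ.mem_finsupport z).1 hi; exact this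
          have h5 : dist (a i) (z : X) < 5 * infDist (z : X) A := key z i hne0
          have : dist (⟨a i, ha i⟩ : A) ⟨x, hx⟩ < δ₁ := by
            rw [Subtype.dist_eq]
            dsimp only
            calc dist (a i) x ≤ dist (a i) y + dist y x := dist_triangle _ _ _
              _ < δ₁ := by
                  have := key z i hne0
                  have : dist (a i) (z : X) < 5 * dist y x := lt_of_lt_of_le h5 (by linarith)
                  linarith
          exact hδf this
        have heq : g z - f ⟨x, hx⟩ = ∑ i ∈ ρ.finsupport z, ρ i z • (c i - f ⟨x, hx⟩) := by
          rw [hgsum z, eq_comm]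
          calc ∑ i ∈ ρ.finsupport z, ρ i z • (c i - f ⟨x, hx⟩)
              = ∑ i ∈ ρ.finsupport z, (ρ i z • c i - ρ i z • f ⟨x, hx⟩) := by
                simp [smul_sub]
            _ = (∑ i ∈ ρ.finsupport z, ρ i z • c i)
                - (∑ i ∈ ρ.finsupport z, ρ i z) • f ⟨x, hx⟩ := by
                rw [Finset.sum_sub_distrib, Finset.sum_smul]
            _ = _ := by rw [hsum1 z, one_smul]
        have : dist (g z) (f ⟨x, hx⟩) ≤ ε / 2 := by
          rw [dist_eq_norm, heq]
          calc ‖∑ i ∈ ρ.finsupport z, ρ i z • (c i - f ⟨x, hx⟩)‖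
              ≤ ∑ i ∈ ρ.finsupport z, ‖ρ i z • (c i - f ⟨x, hx⟩)‖ := norm_sum_le _ _
            _ ≤ ∑ i ∈ ρ.finsupport z, ρ i z * (ε / 2) := by
                refine Finset.sum_le_sum fun i hi => ?_
                rw [norm_smul, Real.norm_of_nonneg (ρ.nonneg i z)]
                refine mul_le_mul_of_nonneg_left ?_ (ρ.nonneg i z)
                rw [← dist_eq_norm]
                exact (hci i hi).le
            _ = ε / 2 := by rw [← Finset.sum_mul, hsum1 z, one_mul]
        linarith
    · have hcO : ContinuousOn F Aᶜ := by
        rw [continuousOn_iff_continuous_restrict]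
        convert hgc using 1
        funext z
        exact hFg z.1 z.2
      exact hcO.continuousAt (hA.isOpen_compl.mem_nhds hx)
  · intro x
    by_cases hx : x ∈ A
    · rw [hFA x hx]; exact subset_convexHull ℝ _ ⟨_, rfl⟩
    · rw [hFg x hx]; exact hhull _

theorem kuratowski_wojdyslawski {Y : Type v} [MetricSpace Y] (y0 : Y) :
    ∃ e : Y → BoundedContinuousFunction Y ℝ, Isometry e ∧
      ∀ g ∈ convexHull ℝ (Set.range e), g ∈ closure (Set.range e) → g ∈ Set.range e := by
  classical
  set e : Y → BoundedContinuousFunction Y ℝ := fun y =>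
    BoundedContinuousFunction.mkOfBound
      ⟨fun x => dist y x - dist y0 x, by fun_prop⟩ (2 * dist y y0)
      (fun x x' => by
        have h1 : |dist y x - dist y0 x| ≤ dist y y0 := abs_dist_sub_le _ _ _
        have h2 : |dist y x' - dist y0 x'| ≤ dist y y0 := abs_dist_sub_le _ _ _
        rw [Real.dist_eq]
        calc |dist y x - dist y0 x - (dist y x' - dist y0 x')|
            ≤ |dist y x - dist y0 x| + |dist y x' - dist y0 x'| := abs_sub _ _
          _ ≤ 2 * dist y y0 := by linarith) with he
  have heval : ∀ y x : Y, e y x = dist y x - dist y0 x := fun _ _ => rfl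
  have hiso : Isometry e := by
    refine Isometry.of_dist_eq fun y1 y2 => le_antisymm ?_ ?_
    · refine (BoundedContinuousFunction.dist_le dist_nonneg).2 fun x => ?_
      rw [Real.dist_eq, heval, heval]
      have := abs_dist_sub_le y1 y2 x
      calc |dist y1 x - dist y0 x - (dist y2 x - dist y0 x)| = |dist y1 x - dist y2 x| := by
            ring_nf
        _ ≤ dist y1 y2 := abs_dist_sub_le _ _ _
    · have h := BoundedContinuousFunction.dist_coe_le_dist (f := e y1) (g := e y2) y2
      rw [Real.dist_eq, heval, heval, dist_self] at h
      calc dist y1 y2 = |dist y1 y2 - 0 - (0 - 0)| := by rw [abs_of_nonneg] <;> simp [dist_nonneg]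
        _ ≤ dist (e y1) (e y2) := by
            simpa using h
  refine ⟨e, hiso, ?_⟩
  intro g hg hgc
  rw [convexHull_eq] at hg
  obtain ⟨ι, t, w, zf, hw0, hw1, hzf, hcm⟩ := hg
  obtain ⟨i0, hi0t, hi0⟩ : ∃ i ∈ t, 0 < w i := by
    by_contra h
    push_neg at h
    have : ∑ i ∈ t, w i ≤ 0 := Finset.sum_nonpos h
    linarith
  have hζ' : ∀ i, ∃ z : Y, i ∈ t → zf i = e z := by
    intro i
    by_cases hi : i ∈ t
    · obtain ⟨z, hz⟩ := hzf i hi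
      exact ⟨z, fun _ => hz.symm⟩
    · exact ⟨y0, fun h => absurd h hi⟩
  choose ζ hζ using hζ'
  have hgsum : g = ∑ i ∈ t, w i • e (ζ i) := by
    rw [← hcm, Finset.centerMass_eq_of_sum_1 _ _ hw1]
    exact Finset.sum_congr rfl fun i hi => by rw [hζ i hi]
  have hgy : ∀ y : Y, g y = ∑ i ∈ t, w i * (dist (ζ i) y - dist y0 y) := by
    intro y
    rw [hgsum]
    rw [BoundedContinuousFunction.coe_sum]
    simp [heval, Finset.sum_apply]
  have claim : ∀ ε > (0:ℝ), dist g (e (ζ i0)) ≤ ε * (1 + (w i0)⁻¹) := by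
    intro ε hε
    obtain ⟨b, ⟨y, rfl⟩, hb⟩ := Metric.mem_closure_iff.1 hgc ε hε
    have hpt : |g y - e y y| ≤ dist g (e y) := by
      have := BoundedContinuousFunction.dist_coe_le_dist (f := g) (g := e y) y
      rwa [Real.dist_eq] at this
    have hptval : g y - e y y = ∑ i ∈ t, w i * dist (ζ i) y := by
      rw [hgy y, heval, dist_self]
      have h1 : ∑ i ∈ t, w i * (dist (ζ i) y - dist y0 y)
          = ∑ i ∈ t, w i * dist (ζ i) y - (∑ i ∈ t, w i) * dist y0 y := by
        rw [Finset.sum_mul, ← Finset.sum_sub_distrib]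
        exact Finset.sum_congr rfl fun i _ => by ring
      rw [h1, hw1]
      ring
    have hsumlt : ∑ i ∈ t, w i * dist (ζ i) y < ε := by
      have hnn : 0 ≤ ∑ i ∈ t, w i * dist (ζ i) y :=
        Finset.sum_nonneg fun i hi => mul_nonneg (hw0 i hi) dist_nonneg
      have : |g y - e y y| < ε := lt_of_le_of_lt hpt hb
      rw [hptval, abs_of_nonneg hnn] at this
      exact this
    have hd0 : w i0 * dist (ζ i0) y < ε :=
      lt_of_le_of_lt (Finset.single_le_sum (fun i hi => mul_nonneg (hw0 i hi) dist_nonneg) hi0t)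
        hsumlt
    have hdzy : dist (ζ i0) y ≤ ε / w i0 := by
      rw [le_div_iff₀ hi0]
      linarith [mul_comm (w i0) (dist (ζ i0) y)]
    calc dist g (e (ζ i0)) ≤ dist g (e y) + dist (e y) (e (ζ i0)) := dist_triangle _ _ _
      _ ≤ ε + ε / w i0 := by
          rw [hiso.dist_eq y (ζ i0), dist_comm y (ζ i0)]
          exact add_le_add hb.le hdzy
      _ = ε * (1 + (w i0)⁻¹) := by field_simp
  have h0 : dist g (e (ζ i0)) ≤ 0 := by
    by_contra h
    push_neg at h
    have hK : (0:ℝ) < 1 + (w i0)⁻¹ := by positivity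
    have hcl := claim (dist g (e (ζ i0)) / (2 * (1 + (w i0)⁻¹))) (by positivity)
    have h2 : dist g (e (ζ i0)) / (2 * (1 + (w i0)⁻¹)) * (1 + (w i0)⁻¹)
        = dist g (e (ζ i0)) / 2 := by
      field_simp [hK.ne']
    rw [h2] at hcl
    linarith
  exact ⟨ζ i0, (dist_le_zero.1 h0).symm⟩

end Aux

set_option synthInstance.maxHeartbeats 1000000 in
/-- Proposition 0.1: a metrizable space `Y` over `B0` is an `ANR_{B0}`-space iff it is an
`ANE_{B0}`-space. -/
theorem fiberANR_iff_fiberANE (B0 : Type u) [TopologicalSpace B0] [MetrizableSpace B0]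
    (Y : Type u) [TopologicalSpace Y] [MetrizableSpace Y] (πY : Y → B0) (hπY : Continuous πY) :
    IsFiberANR B0 Y πY ↔ IsFiberANE B0 Y πY := by
  constructor
  · -- ANR → ANE
    rintro ⟨hmY, hcY, hanr⟩
    refine ⟨hmY, hcY, ?_⟩
    intro X tX hmX πX hπX A hAcl f hfc hffp
    rcases A.eq_empty_or_nonempty with rfl | ⟨x0, hx0⟩
    · haveI : IsEmpty ↥(∅ : Set X) := Set.isEmpty_coe_sort.2 rfl
      refine ⟨∅, by simp [nhdsSet_empty], fun u => isEmptyElim u,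
        continuous_iff_continuousAt.2 fun u => isEmptyElim u, fun u => isEmptyElim u, ?_⟩
      intro a ha _
      exact absurd ha (Set.notMem_empty a)
    · have hy0 : Y := f ⟨x0, hx0⟩
      letI mY : MetricSpace Y := TopologicalSpace.metrizableSpaceMetric Y
      obtain ⟨e, hiso, hwoj⟩ := kuratowski_wojdyslawski hy0
      set C : Set (BoundedContinuousFunction Y ℝ) := convexHull ℝ (Set.range e) with hC
      have hmemC : ∀ y, e y ∈ C := fun y => subset_convexHull ℝ _ ⟨y, rfl⟩
      letI mB : MetricSpace B0 := TopologicalSpace.metrizableSpaceMetric B0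
      set i : Y → B0 × ↥C := fun y => (πY y, ⟨e y, hmemC y⟩) with hidef
      have hecont : Continuous e := hiso.continuous
      have hicont : Continuous i := hcY.prodMk (hecont.subtype_mk _)
      have hemb : IsEmbedding i := by
        refine IsEmbedding.of_comp hicont (continuous_subtype_val.comp continuous_snd) ?_
        exact hiso.isEmbedding
      have hclosed : IsClosed (Set.range i) := by
        refine IsSeqClosed.isClosed ?_
        intro u p hu hup
        choose y hy using hu
        have he1 : Filter.Tendsto (fun n => e (y n)) Filter.atTop (𝓝 (p.2 : _)) :=
          Filter.Tendsto.congr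
            (fun n => by
              show ((u n).2 : BoundedContinuousFunction Y ℝ) = e (y n)
              rw [← hy n])
            (((continuous_subtype_val.comp continuous_snd).tendsto p).comp hup)
        have hp2cl : (p.2 : BoundedContinuousFunction Y ℝ) ∈ closure (Set.range e) :=
          mem_closure_of_tendsto he1 (Filter.Eventually.of_forall fun n => ⟨y n, rfl⟩)
        obtain ⟨z, hz⟩ := hwoj _ p.2.2 hp2cl
        have hyz : Filter.Tendsto y Filter.atTop (𝓝 z) := by
          rw [hiso.isEmbedding.toIsInducing.tendsto_nhds_iff]
          show Filter.Tendsto (fun n => e (y n)) Filter.atTop (𝓝 (e z))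
          rw [hz]
          exact he1
        have hb : p.1 = πY z := by
          have h1 : Filter.Tendsto (fun n => πY (y n)) Filter.atTop (𝓝 p.1) :=
            Filter.Tendsto.congr
              (fun n => by
                show (u n).1 = πY (y n)
                rw [← hy n])
              ((continuous_fst.tendsto p).comp hup)
          exact tendsto_nhds_unique h1 ((hcY.tendsto z).comp hyz)
        exact ⟨z, Prod.ext (by exact hb.symm) (Subtype.ext (by exact hz))⟩
      obtain ⟨U, hU, r, hrc, hrrange, hrfp, hrid⟩ :=
        hanr (B0 × ↥C) inferInstance inferInstance Prod.fst continuous_fst i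
          ⟨hemb, hclosed⟩ (fun y => rfl)
      letI mX : MetricSpace X := TopologicalSpace.metrizableSpaceMetric X
      have hφc : Continuous (fun a : ↥A => e (f a)) := hecont.comp hfc
      obtain ⟨Φ, hΦc, hΦA, hΦhull⟩ := dugundji_extension hAcl ⟨x0, hx0⟩ _ hφc
      have hsub : Set.range (fun a : ↥A => e (f a)) ⊆ Set.range e :=
        Set.range_subset_iff.2 fun a => Set.mem_range_self (f a)
      have hΦC : ∀ x, Φ x ∈ C := fun x => convexHull_mono hsub (hΦhull x)
      set Ψ : X → B0 × ↥C := fun x => (πX x, ⟨Φ x, hΦC x⟩) with hΨdef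
      have hΨc : Continuous Ψ := hπX.prodMk (hΦc.subtype_mk _)
      have hΨA : ∀ (a : X) (ha : a ∈ A), Ψ a = i (f ⟨a, ha⟩) := fun a ha =>
        Prod.ext (hffp ⟨a, ha⟩).symm (Subtype.ext (hΦA a ha))
      obtain ⟨V, hVo, hVsub, hVU⟩ := mem_nhdsSet_iff_exists.1 hU
      have hAV : A ⊆ Ψ ⁻¹' V := by
        intro a ha
        have : Ψ a ∈ Set.range i := by rw [hΨA a ha]; exact Set.mem_range_self _
        exact hVsub this
      have hmemU : ∀ u : ↥(Ψ ⁻¹' V), Ψ u ∈ U := fun u => hVU u.2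
      have hφinvc : Continuous ((IsEmbedding.toHomeomorph hemb).symm) :=
        (IsEmbedding.toHomeomorph hemb).symm.continuous
      have hiφinv : ∀ z : ↥(Set.range i),
          i ((IsEmbedding.toHomeomorph hemb).symm z) = z := fun z =>
        congrArg Subtype.val ((IsEmbedding.toHomeomorph hemb).apply_symm_apply z)
      refine ⟨Ψ ⁻¹' V, (hVo.preimage hΨc).mem_nhdsSet.2 hAV,
        fun u => (IsEmbedding.toHomeomorph hemb).symm
          ⟨r ⟨Ψ u, hmemU u⟩, hrrange ⟨Ψ u, hmemU u⟩⟩, ?_, ?_, ?_⟩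
      · exact hφinvc.comp
          ((hrc.comp ((hΨc.comp continuous_subtype_val).subtype_mk _)).subtype_mk _)
      · intro u
        have h1 := hiφinv ⟨r ⟨Ψ u, hmemU u⟩, hrrange ⟨Ψ u, hmemU u⟩⟩
        have h3 : (r ⟨Ψ ↑u, hmemU u⟩).1 = (Ψ (u : X)).1 := hrfp ⟨Ψ u, hmemU u⟩
        calc πY ((IsEmbedding.toHomeomorph hemb).symm
              ⟨r ⟨Ψ u, hmemU u⟩, hrrange ⟨Ψ u, hmemU u⟩⟩)
            = (i ((IsEmbedding.toHomeomorph hemb).symm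
              ⟨r ⟨Ψ u, hmemU u⟩, hrrange ⟨Ψ u, hmemU u⟩⟩)).1 := rfl
          _ = (r ⟨Ψ ↑u, hmemU u⟩).1 := congrArg Prod.fst h1
          _ = (Ψ (u : X)).1 := h3
          _ = πX u := rfl
      · intro x hxA hxu
        have hΨx : Ψ x = i (f ⟨x, hxA⟩) := hΨA x hxA
        have hρx : r ⟨Ψ x, hmemU ⟨x, hxu⟩⟩ = Ψ x := by
          apply hrid
          show Ψ x ∈ Set.range i
          rw [hΨx]
          exact Set.mem_range_self _
        have hsub : (⟨r ⟨Ψ x, hmemU ⟨x, hxu⟩⟩, hrrange ⟨Ψ x, hmemU ⟨x, hxu⟩⟩⟩ :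
              ↥(Set.range i))
            = ⟨i (f ⟨x, hxA⟩), Set.mem_range_self _⟩ := Subtype.ext (hρx.trans hΨx)
        show (IsEmbedding.toHomeomorph hemb).symm _ = f ⟨x, hxA⟩
        rw [hsub]
        have h4 : (⟨i (f ⟨x, hxA⟩), Set.mem_range_self _⟩ : ↥(Set.range i))
            = (IsEmbedding.toHomeomorph hemb) (f ⟨x, hxA⟩) := rfl
        rw [h4, Homeomorph.symm_apply_apply]
  · -- ANE → ANR
    rintro ⟨hmY, hcY, hane⟩
    refine ⟨hmY, hcY, ?_⟩
    intro X tX hmX πX hπX i hi hifp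
    have hAcl : IsClosed (Set.range i) := hi.isClosed_range
    set φ : ↥(Set.range i) → Y := fun z => (IsEmbedding.toHomeomorph hi.toIsEmbedding).symm z
      with hφdef
    have hφc : Continuous φ := (IsEmbedding.toHomeomorph hi.toIsEmbedding).symm.continuous
    have hiφ : ∀ z : ↥(Set.range i), i (φ z) = z := fun z =>
      congrArg Subtype.val ((IsEmbedding.toHomeomorph hi.toIsEmbedding).apply_symm_apply z)
    have hφfp : ∀ z : ↥(Set.range i), πY (φ z) = πX z := by
      intro z
      rw [← hifp (φ z), hiφ z]
    obtain ⟨U, hU, g, hgc, hgfp, hgext⟩ := hane X tX hmX πX hπX _ hAcl φ hφc hφfp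
    refine ⟨U, hU, fun u => i (g u), hi.continuous.comp hgc, fun u => ⟨g u, rfl⟩, ?_, ?_⟩
    · intro u
      rw [hifp (g u)]
      exact hgfp u
    · intro u hu
      have h1 : g u = φ ⟨u, hu⟩ := hgext u hu u.2
      show i (g u) = (u : X)
      rw [h1, hiφ]
end

section
/- For every metrizable space X over B0 there exist an ANR_{B0}-space M with weight w(M) ≤ max{w(X), w(B0), ℵ0} and an f.p. embedding i : X → M such that i(X) is closed in M. -/
open Set Topology TopologicalSpace unitInterval

universe u

/-! ### Auxiliary material -/

section Aux
open Filter Metric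

variable {α : Type u} [MetricSpace α]


noncomputable def kur (x₀ : α) (x : α) : BoundedContinuousFunction α ℝ :=
  BoundedContinuousFunction.mkOfBound
    ⟨fun y => dist x y - dist x₀ y, by fun_prop⟩ (2 * dist x x₀) (by
      intro y z
      have h1 : |dist x y - dist x₀ y| ≤ dist x x₀ := abs_dist_sub_le _ _ _
      have h2 : |dist x z - dist x₀ z| ≤ dist x x₀ := abs_dist_sub_le _ _ _
      rw [Real.dist_eq]
      simp only [ContinuousMap.coe_mk]
      calc |dist x y - dist x₀ y - (dist x z - dist x₀ z)|
          ≤ |dist x y - dist x₀ y| + |dist x z - dist x₀ z| := abs_sub _ _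
        _ ≤ 2 * dist x x₀ := by linarith)

theorem kur_apply (x₀ x y : α) : kur x₀ x y = dist x y - dist x₀ y := rfl

theorem kur_isometry (x₀ : α) : Isometry (kur x₀) := by
  refine Isometry.of_dist_eq fun a b => ?_
  refine le_antisymm ?_ ?_
  · refine (BoundedContinuousFunction.dist_le dist_nonneg).2 fun y => ?_
    rw [Real.dist_eq, kur_apply, kur_apply]
    have := abs_dist_sub_le a b y
    rw [show dist a y - dist x₀ y - (dist b y - dist x₀ y) = dist a y - dist b y by ring]
    exact this
  · have := BoundedContinuousFunction.dist_coe_le_dist (f := kur x₀ a) (g := kur x₀ b) b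
    rw [Real.dist_eq, kur_apply, kur_apply] at this
    simpa [dist_comm] using this

theorem kur_limit (x₀ : α) {c : BoundedContinuousFunction α ℝ}
    (hc : c ∈ convexHull ℝ (Set.range (kur x₀))) {y : ℕ → α}
    (hy : Tendsto (fun n => kur x₀ (y n)) atTop (𝓝 c)) :
    ∃ x : α, c = kur x₀ x ∧ Tendsto y atTop (𝓝 x) := by
  rw [convexHull_eq] at hc
  obtain ⟨ι, t, w, z, hw0, hw1, hz, hcm⟩ := hc
  have hz' : ∀ i, ∃ a, i ∈ t → kur x₀ a = z i := by
    intro i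
    by_cases hi : i ∈ t
    · obtain ⟨a, ha⟩ := hz i hi; exact ⟨a, fun _ => ha⟩
    · exact ⟨x₀, fun h => absurd h hi⟩
  choose x hx using hz'
  have hex : ∃ i ∈ t, 0 < w i := by
    by_contra h
    push_neg at h
    have : ∑ i ∈ t, w i = 0 :=
      Finset.sum_eq_zero fun i hi => le_antisymm (h i hi) (hw0 i hi)
    rw [hw1] at this; norm_num at this
  obtain ⟨i₀, hi₀t, hi₀⟩ := hex
  -- key evaluation estimate
  have hceval : ∀ b : α, c b = (∑ i ∈ t, w i * dist (x i) b) - dist x₀ b := by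
    intro b
    have : c = ∑ i ∈ t, w i • z i := by
      rw [← hcm, Finset.centerMass_eq_of_sum_1 _ _ hw1]
    rw [this]
    have hsum : (∑ i ∈ t, w i • z i) b = ∑ i ∈ t, (w i • z i) b :=
      BoundedContinuousFunction.sum_apply _ _ _
    rw [hsum]
    have : ∀ i ∈ t, (w i • z i) b = w i * dist (x i) b - w i * dist x₀ b := by
      intro i hi
      rw [← hx i hi]
      show w i * (kur x₀ (x i) b) = _
      rw [kur_apply]; ring
    rw [Finset.sum_congr rfl this, Finset.sum_sub_distrib, ← Finset.sum_mul, hw1, one_mul]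
  have key : ∀ n, ∑ i ∈ t, w i * dist (x i) (y n) ≤ dist (kur x₀ (y n)) c := by
    intro n
    have h1 := BoundedContinuousFunction.dist_coe_le_dist (f := kur x₀ (y n)) (g := c) (y n)
    rw [Real.dist_eq, kur_apply, hceval (y n)] at h1
    have h2 : dist (y n) (y n) - dist x₀ (y n) -
        ((∑ i ∈ t, w i * dist (x i) (y n)) - dist x₀ (y n))
        = -(∑ i ∈ t, w i * dist (x i) (y n)) := by
      rw [dist_self]; ring
    rw [h2, abs_neg] at h1
    exact (le_abs_self _).trans h1
  -- the distances go to 0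
  have hd0 : Tendsto (fun n => dist (kur x₀ (y n)) c) atTop (𝓝 0) :=
    tendsto_iff_dist_tendsto_zero.1 hy
  have hterm : ∀ n, 0 ≤ dist (x i₀) (y n) := fun n => dist_nonneg
  have hle : ∀ n, dist (x i₀) (y n) ≤ (w i₀)⁻¹ * dist (kur x₀ (y n)) c := by
    intro n
    have h1 : w i₀ * dist (x i₀) (y n) ≤ ∑ i ∈ t, w i * dist (x i) (y n) :=
      Finset.single_le_sum (fun i hi => mul_nonneg (hw0 i hi) dist_nonneg) hi₀t
    have h2 := (h1.trans (key n))
    rw [← le_div_iff₀' hi₀] at h2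
    rwa [div_eq_inv_mul] at h2
  have hdist : Tendsto (fun n => dist (x i₀) (y n)) atTop (𝓝 0) := by
    have : Tendsto (fun n => (w i₀)⁻¹ * dist (kur x₀ (y n)) c) atTop (𝓝 ((w i₀)⁻¹ * 0)) :=
      hd0.const_mul _
    rw [mul_zero] at this
    exact squeeze_zero hterm hle this
  have hyx : Tendsto y atTop (𝓝 (x i₀)) := by
    rw [tendsto_iff_dist_tendsto_zero]
    simpa [dist_comm] using hdist
  refine ⟨x i₀, ?_, hyx⟩
  have : Tendsto (fun n => kur x₀ (y n)) atTop (𝓝 (kur x₀ (x i₀))) :=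
    ((kur_isometry x₀).continuous.tendsto _).comp hyx
  exact (tendsto_nhds_unique hy this)


end Aux

section DugundjiSec
open Filter Metric


/-- **Dugundji extension theorem**: a continuous map from a nonempty closed subset of a metric
space into a normed real vector space extends continuously, with values in the convex hull of
the range. -/
theorem dugundji {Z : Type u} {E : Type v} [MetricSpace Z] [NormedAddCommGroup E]
    [NormedSpace ℝ E] {A : Set Z} (hA : IsClosed A) (hne : A.Nonempty) (f : A → E)
    (hf : Continuous f) :
    ∃ g : Z → E, Continuous g ∧ (∀ a : A, g a = f a) ∧
      ∀ z, g z ∈ convexHull ℝ (Set.range f) := by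
  classical
  set O := Aᶜ with hO
  -- the cover of the complement by balls
  set U : O → Set O := fun p => {q : O | dist (q : Z) (p : Z) < infDist (p : Z) A / 2} with hU
  have hUopen : ∀ p, IsOpen (U p) := by
    intro p
    have : U p = (fun q : O => (q : Z)) ⁻¹' (ball (p : Z) (infDist (p : Z) A / 2)) := rfl
    rw [this]
    exact isOpen_ball.preimage continuous_subtype_val
  have hinf : ∀ p : O, 0 < infDist (p : Z) A := fun p =>
    (hA.notMem_iff_infDist_pos hne).1 p.2
  have hUcov : (univ : Set O) ⊆ ⋃ p, U p := by
    intro q _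
    exact mem_iUnion.2 ⟨q, by simpa [hU] using half_pos (hinf q)⟩
  obtain ⟨φ, hφ⟩ := PartitionOfUnity.exists_isSubordinate isClosed_univ U hUopen hUcov
  -- nearest-point choices
  have hsel : ∀ p : O, ∃ a, a ∈ A ∧ dist (p : Z) a < 2 * infDist (p : Z) A := by
    intro p
    have h2 : infDist (p : Z) A < 2 * infDist (p : Z) A := by linarith [hinf p]
    obtain ⟨a, ha, hd⟩ := (infDist_lt_iff hne).1 h2
    exact ⟨a, ha, hd⟩
  choose a haA had using hsel
  set b : O → E := fun p => f ⟨a p, haA p⟩ with hb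
  set h : O → E := fun q => ∑ᶠ p, φ p q • b p with hhdef
  have hhcont : Continuous h :=
    hφ.continuous_finsum_smul hUopen fun i => continuousOn_const
  set g : Z → E := fun z => if hz : z ∈ A then f ⟨z, hz⟩ else h ⟨z, hz⟩ with hg
  have hga : ∀ a : A, g a = f a := fun ⟨z, hz⟩ => dif_pos hz
  -- h as a finite convex combination
  have hrepr : ∀ q : O, h q = ∑ i ∈ φ.finsupport q, φ i q • b i := by
    intro q
    rw [hhdef]
    exact (φ.sum_finsupport_smul_eq_finsum (fun i _ => b i)).symm
  have hsum1 : ∀ q : O, ∑ i ∈ φ.finsupport q, φ i q = 1 := fun q =>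
    φ.sum_finsupport (mem_univ q)
  -- values in the convex hull
  have hmem : ∀ z, g z ∈ convexHull ℝ (Set.range f) := by
    intro z
    by_cases hz : z ∈ A
    · rw [hg]; simp only [hz, dif_pos]
      exact subset_convexHull ℝ _ ⟨⟨z, hz⟩, rfl⟩
    · rw [hg]; simp only [hz, dif_neg, not_false_iff]
      set q : O := ⟨z, hz⟩
      rw [hrepr q]
      have := Finset.centerMass_mem_convexHull (φ.finsupport q)
        (fun i _ => φ.nonneg i q) (by rw [hsum1 q]; norm_num)
        (fun i _ => show b i ∈ Set.range f from ⟨⟨a i, haA i⟩, rfl⟩)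
      rwa [Finset.centerMass_eq_of_sum_1 _ _ (hsum1 q)] at this
  refine ⟨g, ?_, hga, hmem⟩
  -- continuity
  rw [continuous_iff_continuousAt]
  intro z
  by_cases hz : z ∈ A
  swap
  · -- at points of the open complement
    have hO' : ContinuousOn g O := by
      rw [continuousOn_iff_continuous_restrict]
      have : O.domRestrict g = h := by
        funext q
        have : (q : Z) ∉ A := q.2
        simp only [Set.domRestrict_apply, hg, this, dif_neg, not_false_iff]
      rw [this]; exact hhcont
    exact hO'.continuousAt ((hA.isOpen_compl).mem_nhds hz)
  · -- at points of A
    rw [Metric.continuousAt_iff]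
    intro ε hε
    -- continuity of f at ⟨z, hz⟩
    have hfc : ContinuousAt f ⟨z, hz⟩ := hf.continuousAt
    rw [Metric.continuousAt_iff] at hfc
    obtain ⟨δ₀, hδ₀, hfδ⟩ := hfc (ε / 2) (by linarith)
    refine ⟨δ₀ / 6, by linarith, fun {y} hy => ?_⟩
    have hgz : g z = f ⟨z, hz⟩ := dif_pos hz
    by_cases hyA : y ∈ A
    · have : g y = f ⟨y, hyA⟩ := dif_pos hyA
      rw [this, hgz]
      refine (hfδ ?_).trans (half_lt_self hε)
      rw [Subtype.dist_eq]
      show dist y z < δ₀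
      linarith
    · set q : O := ⟨y, hyA⟩
      have hgy : g y = h q := dif_neg hyA
      -- each index in the support has its anchor close to z
      have hclose : ∀ i ∈ φ.finsupport q, dist (b i) (f ⟨z, hz⟩) < ε / 2 := by
        intro i hi
        have hiq : q ∈ tsupport (φ i) := by
          rw [φ.mem_finsupport] at hi
          exact subset_closure hi
        have hiU : q ∈ U i := hφ i hiq
        have h1 : dist y (i : Z) < infDist (i : Z) A / 2 := hiU
        have h2 : infDist (i : Z) A ≤ dist (i : Z) z := infDist_le_dist_of_mem hz
        have h3 : dist (i : Z) z ≤ dist (i : Z) y + dist y z := dist_triangle _ _ _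
        have h4 : infDist (i : Z) A < 2 * dist y z := by
          rw [dist_comm (i : Z) y] at h3
          linarith
        have h5 : dist (a i) z ≤ dist (a i) (i : Z) + dist (i : Z) y + dist y z :=
          dist_triangle4 _ _ _ _
        have h6 : dist (a i) (i : Z) < 2 * infDist (i : Z) A := by
          rw [dist_comm]; exact had i
        have h7 : dist (a i) z < δ₀ := by
          rw [dist_comm (i : Z) y] at h5
          linarith
        refine hfδ ?_
        rw [Subtype.dist_eq]
        exact h7
      -- the convex combination estimate
      rw [hgy, hgz, hrepr q, dist_eq_norm]
      have heq : (∑ i ∈ φ.finsupport q, φ i q • b i) - f ⟨z, hz⟩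
          = ∑ i ∈ φ.finsupport q, φ i q • (b i - f ⟨z, hz⟩) := by
        simp only [smul_sub, Finset.sum_sub_distrib, ← Finset.sum_smul, hsum1 q, one_smul]
      rw [heq]
      calc ‖∑ i ∈ φ.finsupport q, φ i q • (b i - f ⟨z, hz⟩)‖
          ≤ ∑ i ∈ φ.finsupport q, ‖φ i q • (b i - f ⟨z, hz⟩)‖ := norm_sum_le _ _
        _ ≤ ∑ i ∈ φ.finsupport q, φ i q * (ε / 2) := by
            refine Finset.sum_le_sum fun i hi => ?_
            rw [norm_smul, Real.norm_eq_abs, abs_of_nonneg (φ.nonneg i q)]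
            refine mul_le_mul_of_nonneg_left ?_ (φ.nonneg i q)
            rw [← dist_eq_norm]
            exact (hclose i hi).le
        _ = ε / 2 := by rw [← Finset.sum_mul, hsum1 q, one_mul]
        _ < ε := half_lt_self hε

end DugundjiSec

section WeightSec
open Filter Metric
theorem tweight_le_basis {Y : Type u} [TopologicalSpace Y] {B : Set (Set Y)}
    (hB : IsTopologicalBasis B) : tweight Y ≤ Cardinal.mk B :=
  csInf_le' ⟨B, hB, rfl⟩

theorem exists_basis_tweight (Y : Type u) [TopologicalSpace Y] :
    ∃ B : Set (Set Y), IsTopologicalBasis B ∧ Cardinal.mk B = tweight Y :=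
by
  have h : {c | ∃ B : Set (Set Y), IsTopologicalBasis B ∧ Cardinal.mk B = c}.Nonempty :=
    ⟨_, {U | IsOpen U}, isTopologicalBasis_opens, rfl⟩
  exact csInf_mem h

theorem exists_dense_le_tweight (Y : Type u) [TopologicalSpace Y] :
    ∃ D : Set Y, Dense D ∧ Cardinal.mk D ≤ tweight Y := by
  obtain ⟨B, hB, hcard⟩ := exists_basis_tweight Y
  have hc : ∀ s : {u : ↥B // (u : Set Y).Nonempty}, ∃ y, y ∈ ((s : ↥B) : Set Y) :=
    fun s => s.2
  choose c hc using hc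
  refine ⟨Set.range c, ?_, ?_⟩
  · rw [dense_iff_inter_open]
    rintro U hU ⟨x, hx⟩
    obtain ⟨v, hvB, hxv, hvU⟩ := hB.exists_subset_of_mem_open hx hU
    exact ⟨c ⟨⟨v, hvB⟩, ⟨x, hxv⟩⟩, hvU (hc ⟨⟨v, hvB⟩, ⟨x, hxv⟩⟩), ⟨_, rfl⟩⟩
  · rw [← hcard]
    exact Cardinal.mk_range_le.trans (Cardinal.mk_le_of_injective
      (fun a b h => Subtype.val_injective h))

theorem tweight_le_of_dense {Y : Type u} [MetricSpace Y] {D : Set Y} (hD : Dense D) :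
    tweight Y ≤ max (Cardinal.mk D) Cardinal.aleph0 := by
  have hB : IsTopologicalBasis
      (Set.range (fun p : ↥D × ULift.{u} ℕ => ball (p.1 : Y) (1 / (p.2.down + 1)))) := by
    refine isTopologicalBasis_of_isOpen_of_nhds ?_ ?_
    · rintro - ⟨p, rfl⟩; exact isOpen_ball
    · intro a u hau hu
      obtain ⟨ε, hε, hball⟩ := Metric.isOpen_iff.1 hu a hau
      obtain ⟨n, hn⟩ := exists_nat_one_div_lt (half_pos hε)
      have hr : (0 : ℝ) < 1 / (n + 1) := by positivity
      obtain ⟨d, hdD, hd⟩ := hD.exists_dist_lt a hr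
      refine ⟨ball d (1 / (n + 1)), ⟨(⟨d, hdD⟩, ULift.up n), rfl⟩, ?_, ?_⟩
      · exact mem_ball.2 hd
      · intro y hy
        apply hball
        rw [mem_ball] at hy ⊢
        have : dist y a ≤ dist y d + dist d a := dist_triangle _ _ _
        rw [dist_comm d a] at this
        have h2 : (1 : ℝ) / (n + 1) < ε / 2 := hn
        linarith
  refine (tweight_le_basis hB).trans ?_
  refine (Cardinal.mk_range_le).trans ?_
  have : Cardinal.mk (↥D × ULift.{u} ℕ) = Cardinal.mk D * Cardinal.aleph0 := by
    simp [Cardinal.mk_prod, Cardinal.mk_uLift, Cardinal.lift_id, Cardinal.mk_denumerable]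
  rw [this]
  refine (Cardinal.mul_le_max _ _).trans ?_
  simp [max_assoc]

theorem tweight_prod_le {Y Z : Type u} [TopologicalSpace Y] [TopologicalSpace Z] :
    tweight (Y × Z) ≤ max (max (tweight Y) (tweight Z)) Cardinal.aleph0 := by
  obtain ⟨BY, hBY, hcY⟩ := exists_basis_tweight Y
  obtain ⟨BZ, hBZ, hcZ⟩ := exists_basis_tweight Z
  refine (tweight_le_basis (hBY.prod hBZ)).trans ?_
  refine (Cardinal.mk_image2_le).trans ?_
  rw [hcY, hcZ]
  exact Cardinal.mul_le_max _ _

section Dense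

variable {α : Type u} [MetricSpace α]

theorem bcf_norm_smul {β : Type v} [TopologicalSpace β] (c : ℝ)
    (f : BoundedContinuousFunction β ℝ) : ‖c • f‖ = |c| * ‖f‖ := by
  rw [show |c| = ‖c‖ from rfl]
  exact norm_smul c f

theorem list_smul_sum {γ : Type v} {E : Type w} [AddCommMonoid E] [Module ℝ E]
    (c : ℝ) (f : γ → E) (l : List γ) :
    (l.map fun p => c • f p).sum = c • (l.map f).sum := by
  induction l with
  | nil => simp
  | cons a l ih => simp [ih, smul_add]

/-- the value of a rational convex combination list -/
noncomputable def rcVal (x₀ : α) (D : Set α) (l : List (↥D × ULift.{u} ℚ)) :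
    BoundedContinuousFunction α ℝ :=
  (l.map fun p => (p.2.down : ℝ) • kur x₀ ↑p.1).sum

/-- validity of a rational convex combination list -/
def rcOk {α : Type u} (D : Set α) (l : List (↥D × ULift.{u} ℚ)) : Prop :=
  (∀ p ∈ l, (0 : ℝ) ≤ (p.2.down : ℝ)) ∧ (l.map fun p => ((p.2.down : ℚ) : ℝ)).sum = 1

theorem rcVal_mem (x₀ : α) (D : Set α) (l : List (↥D × ULift.{u} ℚ)) (h : rcOk D l) :
    rcVal x₀ D l ∈ convexHull ℝ (Set.range (kur x₀)) := by
  obtain ⟨hl0, hl1⟩ := h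
  have key1 : rcVal x₀ D l =
      ∑ k : Fin l.length, ((l.get k).2.down : ℝ) • kur x₀ ↑(l.get k).1 := by
    rw [rcVal]
    conv_lhs => rw [← List.map_get_finRange l, List.map_map]
    rw [Fin.sum_univ_def]
    rfl
  have key2 : ∑ k : Fin l.length, ((l.get k).2.down : ℝ) = 1 := by
    rw [← hl1]
    conv_rhs => rw [← List.map_get_finRange l, List.map_map]
    rw [Fin.sum_univ_def]
    rfl
  have := Finset.centerMass_mem_convexHull (Finset.univ : Finset (Fin l.length))
    (w := fun k => ((l.get k).2.down : ℝ)) (fun k _ => hl0 _ (List.get_mem l k))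
    (by rw [key2]; norm_num) (z := fun k => kur x₀ ↑(l.get k).1)
    (fun k _ => Set.mem_range_self _)
  rwa [Finset.centerMass_eq_of_sum_1 _ _ key2, ← key1] at this

theorem rc_comb (x₀ : α) (D : Set α) (l₁ l₂ : List (↥D × ULift.{u} ℚ))
    (h₁ : rcOk D l₁) (h₂ : rcOk D l₂) (q : ℚ) (hq0 : (0:ℝ) ≤ (q:ℝ)) (hq1 : (q:ℝ) ≤ 1) :
    ∃ l, rcOk D l ∧
      rcVal x₀ D l = (q : ℝ) • rcVal x₀ D l₁ + (1 - (q : ℝ)) • rcVal x₀ D l₂ := by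
  refine ⟨l₁.map (fun p => (p.1, ULift.up (q * p.2.down))) ++
    l₂.map (fun p => (p.1, ULift.up ((1 - q) * p.2.down))), ⟨?_, ?_⟩, ?_⟩
  · intro p hp
    rcases List.mem_append.1 hp with hp | hp <;>
      obtain ⟨r, hr, rfl⟩ := List.mem_map.1 hp
    · show (0:ℝ) ≤ ((q * r.2.down : ℚ) : ℝ)
      push_cast
      exact mul_nonneg hq0 (h₁.1 r hr)
    · show (0:ℝ) ≤ (((1 - q) * r.2.down : ℚ) : ℝ)
      push_cast
      refine mul_nonneg (by linarith) (h₂.1 r hr)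
  · rw [List.map_append, List.sum_append, List.map_map, List.map_map]
    have e1 : ((fun p : ↥D × ULift.{u} ℚ => ((p.2.down : ℚ) : ℝ)) ∘
        fun p : ↥D × ULift.{u} ℚ => (p.1, ULift.up (q * p.2.down)))
        = fun p : ↥D × ULift.{u} ℚ => (q : ℝ) * ((p.2.down : ℚ) : ℝ) := by
      funext p; show ((q * p.2.down : ℚ) : ℝ) = _; push_cast; ring
    have e2 : ((fun p : ↥D × ULift.{u} ℚ => ((p.2.down : ℚ) : ℝ)) ∘
        fun p : ↥D × ULift.{u} ℚ => (p.1, ULift.up ((1 - q) * p.2.down)))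
        = fun p : ↥D × ULift.{u} ℚ => ((1 : ℝ) - (q : ℝ)) * ((p.2.down : ℚ) : ℝ) := by
      funext p; show (((1 - q) * p.2.down : ℚ) : ℝ) = _; push_cast; ring
    rw [e1, e2, List.sum_map_mul_left, List.sum_map_mul_left, h₁.2, h₂.2]
    ring
  · rw [rcVal, List.map_append, List.sum_append, List.map_map, List.map_map]
    have e1 : ((fun p : ↥D × ULift.{u} ℚ => (p.2.down : ℝ) • kur x₀ ↑p.1) ∘
        fun p : ↥D × ULift.{u} ℚ => (p.1, ULift.up (q * p.2.down)))
        = fun p : ↥D × ULift.{u} ℚ => (q : ℝ) • ((p.2.down : ℝ) • kur x₀ ↑p.1) := by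
      funext p
      show ((q * p.2.down : ℚ) : ℝ) • kur x₀ ↑p.1 = _
      rw [smul_smul]
      push_cast
      ring_nf
    have e2 : ((fun p : ↥D × ULift.{u} ℚ => (p.2.down : ℝ) • kur x₀ ↑p.1) ∘
        fun p : ↥D × ULift.{u} ℚ => (p.1, ULift.up ((1 - q) * p.2.down)))
        = fun p : ↥D × ULift.{u} ℚ => ((1:ℝ) - (q:ℝ)) • ((p.2.down : ℝ) • kur x₀ ↑p.1) := by
      funext p
      show (((1 - q) * p.2.down : ℚ) : ℝ) • kur x₀ ↑p.1 = _
      rw [smul_smul]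
      push_cast
      ring_nf
    rw [e1, e2, list_smul_sum, list_smul_sum]
    rfl

theorem dense_rational_hull (x₀ : α) {D : Set α} (hD : Dense D) :
    ∃ S : Set ↥(convexHull ℝ (Set.range (kur x₀))), Dense S ∧
      Cardinal.mk S ≤ max (Cardinal.mk D) Cardinal.aleph0 := by
  classical
  haveI : Nonempty α := ⟨x₀⟩
  haveI : Nonempty ↥D := hD.nonempty.to_subtype
  set S₀ : Set (BoundedContinuousFunction α ℝ) := rcVal x₀ D '' {l | rcOk D l} with hS₀
  have haS : S₀ ⊆ convexHull ℝ (Set.range (kur x₀)) := by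
    rintro - ⟨l, hl, rfl⟩
    exact rcVal_mem x₀ D l hl
  -- closure of S₀ contains the convex hull
  have hcl : convexHull ℝ (Set.range (kur x₀)) ⊆ closure S₀ := by
    refine convexHull_min ?_ ?_
    · rintro - ⟨x, rfl⟩
      rw [Metric.mem_closure_iff]
      intro ε hε
      obtain ⟨d, hdD, hd⟩ := hD.exists_dist_lt x hε
      refine ⟨rcVal x₀ D [(⟨d, hdD⟩, ULift.up 1)], ⟨_, ⟨?_, ?_⟩, rfl⟩, ?_⟩
      · intro p hp
        simp only [List.mem_singleton] at hp
        subst hp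
        norm_num
      · simp
      · have : rcVal x₀ D [(⟨d, hdD⟩, ULift.up 1)] = kur x₀ d := by
          rw [rcVal]; simp
        rw [this, (kur_isometry x₀).dist_eq]
        exact hd
    · intro u hu v hv s t hs ht hst
      rw [Metric.mem_closure_iff] at hu hv ⊢
      intro ε hε
      have hK0 : (0:ℝ) < ‖u‖ + ‖v‖ + 1 := by positivity
      set δ := ε / 4 / (‖u‖ + ‖v‖ + 1) with hδ
      have hδ0 : 0 < δ := by positivity
      obtain ⟨u', hu', hdu⟩ := hu (ε / 4) (by linarith)
      obtain ⟨v', hv', hdv⟩ := hv (ε / 4) (by linarith)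
      have hq : ∃ q : ℚ, (0:ℝ) ≤ (q:ℝ) ∧ (q:ℝ) ≤ 1 ∧ |(q:ℝ) - s| < δ := by
        rcases eq_or_lt_of_le hs with h | h
        · exact ⟨0, by norm_num, by norm_num, by rw [← h]; simpa using hδ0⟩
        · obtain ⟨q, hq1, hq2⟩ := exists_rat_btwn (show max 0 (s - δ) < s from
            max_lt h (by linarith))
          have h0 : (0:ℝ) < q := lt_of_le_of_lt (le_max_left _ _) hq1
          have hsd : s - δ < q := lt_of_le_of_lt (le_max_right _ _) hq1
          refine ⟨q, h0.le, ?_, ?_⟩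
          · have : s ≤ 1 := by linarith
            linarith
          · rw [abs_lt]; constructor <;> linarith
      obtain ⟨q, hq0, hq1, hqs⟩ := hq
      obtain ⟨l₁, hl₁ok, hl₁⟩ := hu'
      obtain ⟨l₂, hl₂ok, hl₂⟩ := hv'
      obtain ⟨l, hlok, hlval⟩ := rc_comb x₀ D l₁ l₂ hl₁ok hl₂ok q hq0 hq1
      refine ⟨rcVal x₀ D l, ⟨l, hlok, rfl⟩, ?_⟩
      rw [hlval, hl₁, hl₂]
      -- now the norm estimate
      have ht' : t = 1 - s := by linarith
      have e1 : dist (s • u + t • v) ((q:ℝ) • u' + (1 - (q:ℝ)) • v')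
          ≤ dist (s • u) ((q:ℝ) • u') + dist (t • v) ((1 - (q:ℝ)) • v') :=
        dist_add_add_le _ _ _ _
      have e2 : dist (s • u) ((q:ℝ) • u')
          ≤ dist (s • u) ((q:ℝ) • u) + dist ((q:ℝ) • u) ((q:ℝ) • u') := dist_triangle _ _ _
      have e3 : dist (s • u) ((q:ℝ) • u) = |s - (q:ℝ)| * ‖u‖ := by
        rw [dist_eq_norm]
        have h' : s • u - (q:ℝ) • u = (s - (q:ℝ)) • u := (sub_smul _ _ _).symm
        rw [h', bcf_norm_smul]
      have e4 : dist ((q:ℝ) • u) ((q:ℝ) • u') = (q:ℝ) * dist u u' := by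
        rw [dist_eq_norm, dist_eq_norm]
        have h' : (q:ℝ) • u - (q:ℝ) • u' = (q:ℝ) • (u - u') := (smul_sub _ _ _).symm
        rw [h', bcf_norm_smul, abs_of_nonneg hq0]
      have e5 : dist (t • v) ((1 - (q:ℝ)) • v')
          ≤ dist (t • v) ((1 - (q:ℝ)) • v) + dist ((1 - (q:ℝ)) • v) ((1 - (q:ℝ)) • v') :=
        dist_triangle _ _ _
      have e6 : dist (t • v) ((1 - (q:ℝ)) • v) = |t - (1 - (q:ℝ))| * ‖v‖ := by
        rw [dist_eq_norm]
        have h' : t • v - (1 - (q:ℝ)) • v = (t - (1 - (q:ℝ))) • v := (sub_smul _ _ _).symm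
        rw [h', bcf_norm_smul]
      have e7 : dist ((1 - (q:ℝ)) • v) ((1 - (q:ℝ)) • v') = (1 - (q:ℝ)) * dist v v' := by
        rw [dist_eq_norm, dist_eq_norm]
        have h' : (1 - (q:ℝ)) • v - (1 - (q:ℝ)) • v' = (1 - (q:ℝ)) • (v - v') :=
          (smul_sub _ _ _).symm
        rw [h', bcf_norm_smul, abs_of_nonneg (show (0:ℝ) ≤ 1 - (q:ℝ) by linarith)]
      have habs : |s - (q:ℝ)| < δ := by rw [abs_sub_comm]; exact hqs
      have habs2 : |t - (1 - (q:ℝ))| < δ := by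
        rw [ht', show (1:ℝ) - s - (1 - (q:ℝ)) = (q:ℝ) - s from by ring]
        exact hqs
      have f1 : |s - (q:ℝ)| * ‖u‖ ≤ δ * (‖u‖ + ‖v‖ + 1) := by
        refine mul_le_mul habs.le ?_ (norm_nonneg u) hδ0.le
        have := norm_nonneg v
        linarith
      have g1 : |t - (1 - (q:ℝ))| * ‖v‖ ≤ δ * (‖u‖ + ‖v‖ + 1) := by
        refine mul_le_mul habs2.le ?_ (norm_nonneg v) hδ0.le
        have := norm_nonneg u
        linarith
      have f2 : δ * (‖u‖ + ‖v‖ + 1) = ε / 4 := by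
        rw [hδ]
        field_simp
      have f3 : (q:ℝ) * dist u u' ≤ dist u u' := mul_le_of_le_one_left dist_nonneg hq1
      have g3 : (1 - (q:ℝ)) * dist v v' ≤ dist v v' :=
        mul_le_of_le_one_left dist_nonneg (by linarith)
      linarith
  -- now produce the dense subset of the subtype
  set S : Set ↥(convexHull ℝ (Set.range (kur x₀))) := {c | (c : BoundedContinuousFunction α ℝ) ∈ S₀}
    with hSdef
  refine ⟨S, ?_, ?_⟩
  · rw [Metric.dense_iff]
    intro c r hr
    obtain ⟨b, hbS, hbd⟩ := Metric.mem_closure_iff.1 (hcl c.2) r hr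
    exact ⟨⟨b, haS hbS⟩, by rwa [mem_ball', Subtype.dist_eq], hbS⟩
  · have h1 : Cardinal.mk S ≤ Cardinal.mk S₀ := by
      refine Cardinal.mk_le_of_injective (f := fun c : S => (⟨↑↑c, c.2⟩ : S₀)) ?_
      intro a b h
      apply Subtype.ext
      apply Subtype.ext
      have := congrArg Subtype.val h
      simpa using this
    refine h1.trans ?_
    have h2 : Cardinal.mk S₀ ≤ Cardinal.mk (List (↥D × ULift.{u} ℚ)) := by
      rw [hS₀]
      exact Cardinal.mk_image_le.trans (Cardinal.mk_subtype_le _)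
    refine h2.trans ?_
    rw [Cardinal.mk_list_eq_max_mk_aleph0]
    have h3 : Cardinal.mk (↥D × ULift.{u} ℚ) = Cardinal.mk D * Cardinal.aleph0 := by
      simp [Cardinal.mk_prod, Cardinal.mk_uLift, Cardinal.lift_id, Cardinal.mk_denumerable]
    rw [h3]
    refine max_le ?_ (le_max_right _ _)
    refine (Cardinal.mul_le_max _ _).trans ?_
    simp [max_assoc]

end Dense


end WeightSec

section MainConstr
open Filter Metric

variable (B0 : Type u) [TopologicalSpace B0] [MetrizableSpace B0]
  (X : Type u) [MetricSpace X]
  (πX : X → B0) (x₀ : X)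

/-- The fiber ANR property of `B0 × convexHull (range (kur x₀))`. -/
theorem fiberANR_construction (b₀ : B0) :
    IsFiberANR B0 (B0 × ↥(convexHull ℝ (Set.range (kur x₀)))) Prod.fst := by
  set C : Set (BoundedContinuousFunction X ℝ) := convexHull ℝ (Set.range (kur x₀)) with hC
  refine ⟨inferInstance, continuous_fst, ?_⟩
  intro X' tX' hmX' πX' hπX' j hj hjfp
  letI : MetricSpace X' := TopologicalSpace.metrizableSpaceMetric X'
  set A : Set X' := Set.range j with hA
  have hAc : IsClosed A := hj.isClosed_range
  have hAne : A.Nonempty :=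
    ⟨j (b₀, ⟨kur x₀ x₀, subset_convexHull ℝ _ ⟨x₀, rfl⟩⟩), mem_range_self _⟩
  set homeo := hj.isEmbedding.toHomeomorph with hhomeo
  set F : A → BoundedContinuousFunction X ℝ := fun u => ((homeo.symm u).2 : C) with hF
  have hFc : Continuous F :=
    continuous_subtype_val.comp (continuous_snd.comp homeo.symm.continuous)
  obtain ⟨g, hgc, hgA, hgm⟩ := dugundji hAc hAne F hFc
  have hgC : ∀ z, g z ∈ C := by
    intro z
    refine convexHull_min ?_ (convex_convexHull ℝ _) (hgm z)
    rintro - ⟨u, rfl⟩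
    exact ((homeo.symm u).2 : C).2
  set G : X' → ↥C := fun z => ⟨g z, hgC z⟩ with hG
  have hGc : Continuous G := hgc.subtype_mk _
  refine ⟨univ, Filter.univ_mem, fun u => j (πX' u, G u), ?_, ?_, ?_, ?_⟩
  · exact hj.continuous.comp (((hπX'.comp continuous_subtype_val)).prodMk
      (hGc.comp continuous_subtype_val))
  · exact fun u => mem_range_self _
  · intro u
    exact hjfp (πX' ↑u, G ↑u)
  · rintro u ⟨m, hm⟩
    show j (πX' ↑u, G ↑u) = ↑u
    have h1 : πX' ↑u = m.1 := by rw [← hm, hjfp]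
    have hmem : (u : X') ∈ A := ⟨m, hm⟩
    have h2 : homeo m = ⟨(u : X'), hmem⟩ := by
      apply Subtype.ext
      show j m = (u : X')
      exact hm
    have h3 : F ⟨(u : X'), hmem⟩ = (m.2 : BoundedContinuousFunction X ℝ) := by
      rw [hF]
      simp only [← h2, Homeomorph.symm_apply_apply]
    have h4 : G ↑u = m.2 := by
      apply Subtype.ext
      show g ↑u = _
      rw [hgA ⟨(u : X'), hmem⟩, h3]
    rw [h1, h4]
    show j m = ↑u
    exact hm

/-- The embedding into the construction is a closed embedding. -/
theorem closedEmbedding_construction (hπX : Continuous πX) :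
    IsClosedEmbedding (fun x : X =>
      ((πX x, ⟨kur x₀ x, subset_convexHull ℝ _ ⟨x, rfl⟩⟩) :
        B0 × ↥(convexHull ℝ (Set.range (kur x₀))))) := by
  set C : Set (BoundedContinuousFunction X ℝ) := convexHull ℝ (Set.range (kur x₀)) with hC
  set κ : X → ↥C := fun x => ⟨kur x₀ x, subset_convexHull ℝ _ ⟨x, rfl⟩⟩ with hκ
  have hκiso : Isometry κ := by
    intro x y
    rw [Subtype.edist_eq]
    exact kur_isometry x₀ x y
  set i : X → B0 × ↥C := fun x => (πX x, κ x) with hi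
  have hic : Continuous i := hπX.prodMk hκiso.continuous
  have hemb : IsEmbedding i := by
    refine IsEmbedding.of_comp hic continuous_snd ?_
    have : Prod.snd ∘ i = κ := rfl
    rw [this]
    exact hκiso.isEmbedding
  refine ⟨hemb, ?_⟩
  haveI f1 : FirstCountableTopology B0 := inferInstance
  haveI f2 : FirstCountableTopology (↥C) := inferInstance
  haveI f3 : FirstCountableTopology (B0 × ↥C) := inferInstance
  haveI : SequentialSpace (B0 × ↥C) := inferInstance
  apply IsSeqClosed.isClosed
  intro u p hu hlim
  choose x hx using hu
  have h2 : Tendsto (fun n => kur x₀ (x n)) atTop (𝓝 (p.2 : BoundedContinuousFunction X ℝ)) := by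
    have := (continuous_subtype_val.comp continuous_snd).continuousAt.tendsto.comp hlim
    refine this.congr fun n => ?_
    simp only [Function.comp_apply]
    rw [← hx n]
  obtain ⟨x', hx', hxx'⟩ := kur_limit x₀ p.2.2 h2
  refine ⟨x', ?_⟩
  have h1 : Tendsto (fun n => πX (x n)) atTop (𝓝 p.1) := by
    have := continuous_fst.continuousAt.tendsto.comp hlim
    refine this.congr fun n => ?_
    simp only [Function.comp_apply]
    rw [← hx n]
  have h1' : Tendsto (fun n => πX (x n)) atTop (𝓝 (πX x')) :=
    (hπX.continuousAt.tendsto).comp hxx'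
  have hp1 : p.1 = πX x' := tendsto_nhds_unique h1 h1'
  have hp2 : p.2 = κ x' := Subtype.ext hx'
  show i x' = p
  rw [hi]
  exact Prod.ext (by simp [hp1]) (by simp [hp2])

end MainConstr


/-- Proposition 0.2: every metrizable space `X` over `B0` embeds as a closed subspace, by an
f.p. embedding, into an `ANR_{B0}`-space `M` with `w(M) ≤ max {w(X), w(B0), ℵ₀}`. -/
theorem exists_fiberANR_closedEmbedding (B0 : Type u) [TopologicalSpace B0] [MetrizableSpace B0]
    (X : Type u) [TopologicalSpace X] [MetrizableSpace X] (πX : X → B0) (hπX : Continuous πX) :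
    ∃ (M : Type u) (_ : TopologicalSpace M) (πM : M → B0),
      IsFiberANR B0 M πM ∧
      tweight M ≤ max (max (tweight X) (tweight B0)) Cardinal.aleph0 ∧
      ∃ i : X → M, IsClosedEmbedding i ∧ ∀ x, πM (i x) = πX x := by
  by_cases hXe : Nonempty X
  · -- X nonempty
    obtain ⟨x₀⟩ := hXe
    letI : MetricSpace X := TopologicalSpace.metrizableSpaceMetric X
    refine ⟨B0 × ↥(convexHull ℝ (Set.range (kur x₀))), inferInstance, Prod.fst,
      fiberANR_construction B0 X x₀ (πX x₀), ?_, _,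
      closedEmbedding_construction B0 X πX x₀ hπX, fun x => rfl⟩
    obtain ⟨D, hD, hDcard⟩ := exists_dense_le_tweight X
    obtain ⟨S, hS, hScard⟩ := dense_rational_hull x₀ hD
    have h1 : tweight (↥(convexHull ℝ (Set.range (kur x₀)))) ≤
        max (Cardinal.mk S) Cardinal.aleph0 := tweight_le_of_dense hS
    have h2 := tweight_prod_le (Y := B0) (Z := ↥(convexHull ℝ (Set.range (kur x₀))))
    set R := max (max (tweight X) (tweight B0)) Cardinal.aleph0 with hR
    have hB0R : tweight B0 ≤ R := (le_max_right _ _).trans (le_max_left _ _)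
    have hXR : tweight X ≤ R := (le_max_left _ _).trans (le_max_left _ _)
    have hℵR : Cardinal.aleph0 ≤ R := le_max_right _ _
    have hCR : tweight (↥(convexHull ℝ (Set.range (kur x₀)))) ≤ R := by
      refine h1.trans (max_le ?_ hℵR)
      refine hScard.trans (max_le ?_ hℵR)
      exact hDcard.trans hXR
    exact h2.trans (max_le (max_le hB0R hCR) hℵR)
  · -- X empty
    haveI : IsEmpty X := not_nonempty_iff.1 hXe
    refine ⟨X, ‹_›, πX, ⟨‹_›, hπX, ?_⟩, ?_, id, IsClosedEmbedding.id, fun x => rfl⟩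
    · intro X' tX' hmX' πX' hπX' i hi hifp
      have hrange : Set.range i = ∅ := Set.range_eq_empty i
      haveI : IsEmpty ↥(∅ : Set X') := ⟨fun u => Set.notMem_empty _ u.2⟩
      refine ⟨∅, ?_, fun u => ↑u, ?_, ?_, ?_, ?_⟩
      · rw [hrange, nhdsSet_empty]
        exact Filter.mem_bot
      · exact continuous_subtype_val
      · exact fun u => isEmptyElim u
      · exact fun u => isEmptyElim u
      · exact fun u => isEmptyElim u
    · exact (le_max_left _ _).trans (le_max_left _ _)
end

section
/- Let (Y, π_Y) be an ANR_{B0}-space. Then every open cover 𝒰 of Y admits an open cover 𝒱 of Y such that whenever two f.p. maps f, g : (X, π_X) → (Y, π_Y) from an arbitrary space (X, π_X) over B0 are 𝒱-near, there exists an f.p. 𝒰-homotopy H : X × I → Y from f to g; moreover, if f and g agree on a subset A ⊆ X, then H can be chosen to be an f.p. homotopy rel A. -/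
open Set Topology TopologicalSpace unitInterval

universe u

/-- The Kuratowski-type embedding of a metric space into bounded continuous functions. -/
noncomputable def kurE (Y : Type u) [MetricSpace Y] (y₀ : Y) (y : Y) :
    BoundedContinuousFunction Y ℝ :=
  BoundedContinuousFunction.mkOfBound
    ⟨fun z => dist z y - dist z y₀, by fun_prop⟩ (2 * dist y y₀) (by
      intro a b
      have h1 : |dist a y - dist a y₀| ≤ dist y y₀ := by
        rw [dist_comm a y, dist_comm a y₀]; exact abs_dist_sub_le y y₀ a
      have h2 : |dist b y - dist b y₀| ≤ dist y y₀ := by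
        rw [dist_comm b y, dist_comm b y₀]; exact abs_dist_sub_le y y₀ b
      rw [Real.dist_eq]
      calc |dist a y - dist a y₀ - (dist b y - dist b y₀)|
          ≤ |dist a y - dist a y₀| + |dist b y - dist b y₀| := abs_sub _ _
        _ ≤ 2 * dist y y₀ := by linarith)

@[simp] lemma kurE_apply (Y : Type u) [MetricSpace Y] (y₀ y z : Y) :
    kurE Y y₀ y z = dist z y - dist z y₀ := rfl

lemma kurE_isometry (Y : Type u) [MetricSpace Y] (y₀ : Y) : Isometry (kurE Y y₀) := by
  apply Isometry.of_dist_eq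
  intro a b
  apply le_antisymm
  · apply (BoundedContinuousFunction.dist_le dist_nonneg).2
    intro z
    rw [Real.dist_eq]
    simp only [kurE_apply]
    have : dist z a - dist z y₀ - (dist z b - dist z y₀) = dist z a - dist z b := by ring
    rw [this]
    rw [dist_comm z a, dist_comm z b]
    exact abs_dist_sub_le a b z
  · have h := BoundedContinuousFunction.dist_coe_le_dist
      (f := kurE Y y₀ a) (g := kurE Y y₀ b) a
    simp only [kurE_apply, dist_self] at h
    rw [Real.dist_eq] at h
    have : |0 - dist a y₀ - (dist a b - dist a y₀)| = dist a b := by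
      rw [show (0:ℝ) - dist a y₀ - (dist a b - dist a y₀) = -dist a b by ring, abs_neg,
        abs_of_nonneg dist_nonneg]
    rw [this] at h
    exact h

/-- The range of the Kuratowski embedding is closed in its convex hull
(Kuratowski–Wojdysławski). -/
lemma kurE_mem_range_of_closure (Y : Type u) [MetricSpace Y] (y₀ : Y)
    {v : BoundedContinuousFunction Y ℝ}
    (hconv : v ∈ convexHull ℝ (Set.range (kurE Y y₀)))
    (hcl : v ∈ closure (Set.range (kurE Y y₀))) : v ∈ Set.range (kurE Y y₀) := by
  classical
  haveI : Nonempty Y := ⟨y₀⟩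
  set e := kurE Y y₀ with he
  rw [convexHull_eq] at hconv
  obtain ⟨ι, t, w, z, hw0, hw1, hzs, hcm⟩ := hconv
  rw [Finset.centerMass_eq_of_sum_1 _ _ hw1] at hcm
  let u : ι → Y := fun i => Function.invFun e (z i)
  have hu : ∀ i ∈ t, e (u i) = z i := fun i hi => Function.invFun_eq (hzs i hi)
  have key : ∀ y : Y, ∑ i ∈ t, w i * dist y (u i) ≤ dist v (e y) := by
    intro y
    have h1 : v y = ∑ i ∈ t, w i * (dist y (u i) - dist y y₀) := by
      rw [← hcm]
      rw [show ((∑ i ∈ t, w i • z i : BoundedContinuousFunction Y ℝ) : Y → ℝ) y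
          = ∑ i ∈ t, w i * (z i y) by
        simp [BoundedContinuousFunction.coe_sum, Finset.sum_apply]]
      refine Finset.sum_congr rfl fun i hi => ?_
      rw [← hu i hi]
      simp [he]
    have h2 : v y - e y y = ∑ i ∈ t, w i * dist y (u i) := by
      have hey : e y y = 0 - dist y y₀ := by simp [he]
      rw [h1, hey]
      have hsplit : ∑ i ∈ t, w i * (dist y (u i) - dist y y₀)
          = ∑ i ∈ t, w i * dist y (u i) - (∑ i ∈ t, w i) * dist y y₀ := by
        rw [Finset.sum_mul, ← Finset.sum_sub_distrib]
        refine Finset.sum_congr rfl fun i _ => by ring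
      rw [hsplit, hw1]
      ring
    calc ∑ i ∈ t, w i * dist y (u i) = v y - e y y := h2.symm
      _ ≤ |v y - e y y| := le_abs_self _
      _ = dist (v y) (e y y) := (Real.dist_eq _ _).symm
      _ ≤ dist v (e y) := BoundedContinuousFunction.dist_coe_le_dist y
  set t' := t.filter (fun i => 0 < w i) with ht'
  have ht'sum : ∑ i ∈ t', w i = 1 := by
    rw [ht', Finset.sum_filter_of_ne, hw1]
    intro i hi hne
    exact lt_of_le_of_ne (hw0 i hi) (Ne.symm hne)
  have ht'ne : t'.Nonempty := by
    rw [Finset.nonempty_iff_ne_empty]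
    intro h
    rw [h, Finset.sum_empty] at ht'sum
    norm_num at ht'sum
  set m := t'.inf' ht'ne (fun i => dist v (z i)) with hm_def
  have hm : ∀ ε > (0:ℝ), m < 2 * ε := by
    intro ε hε
    obtain ⟨b, hbmem, hb⟩ := Metric.mem_closure_iff.mp hcl ε hε
    obtain ⟨y, rfl⟩ := hbmem
    have hsum : ∑ i ∈ t, w i * dist y (u i) < ε := lt_of_le_of_lt (key y) hb
    by_contra hcon
    push_neg at hcon
    have hfar : ∀ i ∈ t', ε ≤ dist y (u i) := by
      intro i hi
      have hd : 2 * ε ≤ dist v (z i) := hcon.trans (Finset.inf'_le _ hi)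
      have htri : dist v (z i) ≤ ε + dist y (u i) := by
        calc dist v (z i) ≤ dist v (e y) + dist (e y) (z i) := dist_triangle _ _ _
          _ ≤ ε + dist y (u i) := by
              refine add_le_add hb.le (le_of_eq ?_)
              rw [← hu i (Finset.mem_filter.mp hi).1]
              exact (kurE_isometry Y y₀).dist_eq y (u i)
      linarith
    have hbig : ε ≤ ∑ i ∈ t, w i * dist y (u i) := by
      have h1 : ∑ i ∈ t', w i * dist y (u i) ≤ ∑ i ∈ t, w i * dist y (u i) :=
        Finset.sum_le_sum_of_subset_of_nonneg (Finset.filter_subset _ _)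
          (fun i hi _ => mul_nonneg (hw0 i hi) dist_nonneg)
      calc ε = ∑ i ∈ t', w i * ε := by rw [← Finset.sum_mul, ht'sum, one_mul]
        _ ≤ ∑ i ∈ t', w i * dist y (u i) :=
            Finset.sum_le_sum fun i hi =>
              mul_le_mul_of_nonneg_left (hfar i hi) (Finset.mem_filter.mp hi).2.le
        _ ≤ _ := h1
    linarith
  have hm0 : m ≤ 0 := by
    by_contra h
    push_neg at h
    have := hm (m / 4) (by linarith)
    linarith
  obtain ⟨i0, hi0, hmi⟩ := Finset.exists_mem_eq_inf' ht'ne (fun i => dist v (z i))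
  have hz0 : dist v (z i0) = 0 := le_antisymm (by rw [← hmi]; exact hm0) dist_nonneg
  have hvz : v = z i0 := by rwa [dist_eq_zero] at hz0
  exact ⟨u i0, by rw [hu i0 (Finset.mem_filter.mp hi0).1, ← hvz]⟩

set_option maxHeartbeats 1000000 in
set_option synthInstance.maxHeartbeats 400000 in
/-- Proposition 0.3: for an `ANR_{B0}`-space `Y` every open cover `𝒰` admits an open cover `𝒱`
such that any two `𝒱`-near f.p. maps into `Y` are connected by an f.p. `𝒰`-homotopy, which may
moreover be chosen rel any subset on which the two maps agree. -/
theorem fiberANR_near_implies_cover_homotopy (B0 : Type u) [TopologicalSpace B0]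
    [MetrizableSpace B0] (Y : Type u) [TopologicalSpace Y] (πY : Y → B0)
    (hY : IsFiberANR B0 Y πY) (𝒰 : Set (Set Y)) (h𝒰 : IsOpenCover 𝒰) :
    ∃ 𝒱 : Set (Set Y), IsOpenCover 𝒱 ∧
      ∀ (X : Type u) (_ : TopologicalSpace X) (πX : X → B0), Continuous πX →
        ∀ f g : X → Y, IsFPMap πX πY f → IsFPMap πX πY g → UNear 𝒱 f g →
        ∀ A : Set X, (∀ a ∈ A, f a = g a) →
        ∃ H : X × unitInterval → Y, Continuous H ∧
          (∀ x, H (x, 0) = f x) ∧ (∀ x, H (x, 1) = g x) ∧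
          (∀ x t, πY (H (x, t)) = πX x) ∧
          (∀ x, ∃ V ∈ 𝒰, ∀ t, H (x, t) ∈ V) ∧
          ∀ a ∈ A, ∀ t, H (a, t) = f a := by

  classical
  obtain ⟨hMetY, hπY, hANR⟩ := hY
  by_cases hne : Nonempty Y
  swap
  · refine ⟨{Set.univ}, ⟨fun V hV => by rw [Set.mem_singleton_iff] at hV; exact hV ▸ isOpen_univ,
      by simp⟩, ?_⟩
    intro X _ πX hπX f g hf hg hnear A hA
    have hXemp : ∀ x : X, False := fun x => (not_nonempty_iff.mp hne).false (f x)
    exact ⟨fun p => f p.1, hf.1.comp continuous_fst, fun x => rfl,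
      fun x => (hXemp x).elim, fun x t => (hXemp x).elim,
      fun x => (hXemp x).elim, fun a _ t => rfl⟩
  obtain ⟨y₀⟩ := hne
  haveI : Nonempty Y := ⟨y₀⟩
  letI : MetricSpace Y := TopologicalSpace.metrizableSpaceMetric Y
  letI : MetricSpace B0 := TopologicalSpace.metrizableSpaceMetric B0
  set e := kurE Y y₀ with he_def
  have he : Isometry e := kurE_isometry Y y₀
  set C : Set (BoundedContinuousFunction Y ℝ) := convexHull ℝ (Set.range e) with hC_def
  have hCmem : ∀ y, e y ∈ C := fun y => subset_convexHull ℝ _ ⟨y, rfl⟩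
  let i : Y → B0 × ↥C := fun y => (πY y, ⟨e y, hCmem y⟩)
  have hi2iso : Isometry (fun y => (⟨e y, hCmem y⟩ : ↥C)) :=
    Isometry.of_dist_eq fun a b => by rw [Subtype.dist_eq]; exact he.dist_eq a b
  have hic : Continuous i := hπY.prodMk hi2iso.continuous
  have hiemb : IsEmbedding i :=
    IsEmbedding.of_comp hic continuous_snd (by
      have h : (Prod.snd ∘ i) = fun y => (⟨e y, hCmem y⟩ : ↥C) := rfl
      rw [h]; exact hi2iso.isEmbedding)
  have hiinj : Function.Injective i := hiemb.injective
  have hrangecl : IsClosed (Set.range i) := by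
    apply isClosed_of_closure_subset
    rintro ⟨b, w⟩ hbw
    obtain ⟨sq, hsqmem, hsqlim⟩ := mem_closure_iff_seq_limit.mp hbw
    choose yn hyn using hsqmem
    have hlim2 : Filter.Tendsto (fun n => e (yn n)) Filter.atTop
        (nhds (w : BoundedContinuousFunction Y ℝ)) := by
      have hcont : Continuous fun p : B0 × ↥C => (p.2 : BoundedContinuousFunction Y ℝ) :=
        continuous_subtype_val.comp continuous_snd
      have h := (hcont.continuousAt (x := (b, w))).tendsto.comp hsqlim
      have hfun : (fun n => e (yn n)) =
          fun n => ((sq n).2 : BoundedContinuousFunction Y ℝ) :=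
        funext fun n => by rw [← hyn n]
      rw [hfun]
      exact h
    have hlim1 : Filter.Tendsto (fun n => πY (yn n)) Filter.atTop (nhds b) := by
      have h := ((continuous_fst (X := B0) (Y := ↥C)).continuousAt (x := (b, w))).tendsto.comp hsqlim
      have hfun : (fun n => πY (yn n)) = fun n => (sq n).1 := funext fun n => by rw [← hyn n]
      rw [hfun]
      exact h
    have hwcl : (w : BoundedContinuousFunction Y ℝ) ∈ closure (Set.range e) :=
      mem_closure_of_tendsto hlim2 (Filter.Eventually.of_forall fun n => ⟨yn n, rfl⟩)
    obtain ⟨zz, hzz⟩ := kurE_mem_range_of_closure Y y₀ w.2 hwcl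
    have hyzlim : Filter.Tendsto yn Filter.atTop (nhds zz) := by
      rw [he.isEmbedding.tendsto_nhds_iff]
      have : e zz = (w : BoundedContinuousFunction Y ℝ) := hzz
      rw [show (e ∘ yn) = fun n => e (yn n) from rfl, this]
      exact hlim2
    have hb : πY zz = b := tendsto_nhds_unique ((hπY.tendsto zz).comp hyzlim) hlim1
    refine ⟨zz, ?_⟩
    have hw : (⟨e zz, hCmem zz⟩ : ↥C) = w := Subtype.ext hzz
    rw [show i zz = (πY zz, ⟨e zz, hCmem zz⟩) from rfl, hb, hw]
  have hicl : IsClosedEmbedding i := ⟨hiemb, hrangecl⟩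
  obtain ⟨U, hU, r, hrc, hrrange, hrfp, hrretr⟩ :=
    hANR (B0 × ↥C) inferInstance inferInstance Prod.fst continuous_fst i hicl (fun y => rfl)
  let r' : ↥U → Y := fun u => Function.invFun i (r u)
  have hir' : ∀ u, i (r' u) = r u := fun u => Function.invFun_eq (hrrange u)
  have hr'c : Continuous r' := by
    rw [hiemb.toIsInducing.continuous_iff]
    have h : (i ∘ r') = r := funext hir'
    rw [h]; exact hrc
  have hr'fp : ∀ u : ↥U, πY (r' u) = (u : B0 × ↥C).1 := fun u => by
    have h1 : (i (r' u)).1 = πY (r' u) := rfl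
    rw [← h1, hir' u]; exact hrfp u
  have hr'id : ∀ (y : Y) (h : i y ∈ U), r' ⟨i y, h⟩ = y := fun y h => by
    apply hiinj
    rw [hir' ⟨i y, h⟩]
    exact hrretr ⟨i y, h⟩ ⟨y, rfl⟩
  have hchoice : ∀ y : Y, ∃ (W : Set Y) (ε : ℝ), W ∈ 𝒰 ∧ 0 < ε ∧
      Metric.ball (i y) (2 * ε) ⊆ U ∧
      ∀ (p : B0 × ↥C) (hp : p ∈ U), p ∈ Metric.ball (i y) (2 * ε) → r' ⟨p, hp⟩ ∈ W := by
    intro y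
    obtain ⟨W, hW𝒰, hyW⟩ : ∃ W ∈ 𝒰, y ∈ W := by
      have hy : y ∈ ⋃₀ 𝒰 := h𝒰.2.symm ▸ Set.mem_univ y
      exact Set.mem_sUnion.mp hy
    have hU' : U ∈ nhds (i y) := mem_nhdsSet_iff_forall.mp hU (i y) ⟨y, rfl⟩
    have hUy : i y ∈ U := mem_of_mem_nhds hU'
    have hWop : IsOpen (r' ⁻¹' W) := (h𝒰.1 W hW𝒰).preimage hr'c
    have hmem : (⟨i y, hUy⟩ : ↥U) ∈ r' ⁻¹' W := by
      rw [Set.mem_preimage, hr'id y hUy]; exact hyW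
    have hnh : r' ⁻¹' W ∈ nhds (⟨i y, hUy⟩ : ↥U) := hWop.mem_nhds hmem
    rw [nhds_subtype_eq_comap, Filter.mem_comap] at hnh
    obtain ⟨V, hV, hVsub⟩ := hnh
    obtain ⟨δ, hδpos, hδ⟩ := Metric.mem_nhds_iff.mp (Filter.inter_mem hU' hV)
    refine ⟨W, δ / 2, hW𝒰, by positivity, ?_, ?_⟩
    · intro p hp
      have hball : p ∈ Metric.ball (i y) δ := by
        rw [Metric.mem_ball] at hp ⊢; linarith
      exact (hδ hball).1
    · intro p hp hball2
      have hpV : p ∈ V := by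
        have hball : p ∈ Metric.ball (i y) δ := by
          rw [Metric.mem_ball] at hball2 ⊢; linarith
        exact (hδ hball).2
      exact hVsub hpV
  choose W ε hW𝒰 hεpos hballU hballW using hchoice
  refine ⟨{V | ∃ y : Y, V = i ⁻¹' Metric.ball (i y) (ε y)}, ⟨?_, ?_⟩, ?_⟩
  · rintro V ⟨y, rfl⟩
    exact Metric.isOpen_ball.preimage hic
  · apply Set.eq_univ_of_forall
    intro y
    exact Set.mem_sUnion.mpr ⟨_, ⟨y, rfl⟩, by simp [Metric.mem_ball, hεpos y]⟩
  · intro X _ πX hπX f g hf hg hnear A hA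
    have hchoosey : ∀ x : X, ∃ y : Y,
        dist (i (f x)) (i y) < ε y ∧ dist (i (g x)) (i y) < ε y := by
      intro x
      obtain ⟨V, hV, hfx, hgx⟩ := hnear x
      simp only [Set.mem_setOf_eq] at hV
      obtain ⟨y, rfl⟩ := hV
      exact ⟨y, hfx, hgx⟩
    choose yc hfc hgc using hchoosey
    have hconvC : Convex ℝ C := convex_convexHull ℝ _
    have hσC : ∀ (x : X) (t : unitInterval),
        (1 - (t : ℝ)) • e (f x) + (t : ℝ) • e (g x) ∈ C := fun x t =>
      hconvC (hCmem (f x)) (hCmem (g x)) (by simpa using t.2.2) t.2.1 (by ring)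
    let sg : X → unitInterval → B0 × ↥C := fun x t =>
      (πX x, ⟨(1 - (t : ℝ)) • e (f x) + (t : ℝ) • e (g x), hσC x t⟩)
    have hdistb : ∀ (x : X) (t : unitInterval), dist (sg x t) (i (yc x)) < 2 * ε (yc x) := by
      intro x t
      rw [Prod.dist_eq]
      apply max_lt
      · have h1 : (sg x t).1 = (i (f x)).1 := (hf.2 x).symm
        have hfst : dist (sg x t).1 (i (yc x)).1 ≤ dist (i (f x)) (i (yc x)) := by
          rw [h1, Prod.dist_eq]
          exact le_max_left _ _
        calc dist (sg x t).1 (i (yc x)).1 ≤ dist (i (f x)) (i (yc x)) := hfst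
          _ < ε (yc x) := hfc x
          _ ≤ 2 * ε (yc x) := by linarith [hεpos (yc x)]
      · have ht0 : (0:ℝ) ≤ (t:ℝ) := t.2.1
        have ht1 : (t:ℝ) ≤ 1 := t.2.2
        have hf' : ‖e (f x) - e (yc x)‖ < ε (yc x) := by
          rw [← dist_eq_norm]
          calc dist (e (f x)) (e (yc x)) ≤ dist (i (f x)) (i (yc x)) := by
                rw [Prod.dist_eq]; exact le_max_right _ _
            _ < ε (yc x) := hfc x
        have hg' : ‖e (g x) - e (yc x)‖ < ε (yc x) := by
          rw [← dist_eq_norm]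
          calc dist (e (g x)) (e (yc x)) ≤ dist (i (g x)) (i (yc x)) := by
                rw [Prod.dist_eq]; exact le_max_right _ _
            _ < ε (yc x) := hgc x
        have henorm : dist ((sg x t).2) ((i (yc x)).2) =
            ‖(1 - (t:ℝ)) • (e (f x) - e (yc x)) + (t:ℝ) • (e (g x) - e (yc x))‖ := by
          rw [Subtype.dist_eq, dist_eq_norm]
          congr 1
          module
        have e1 : (0:ℝ) ≤ (1 - (t:ℝ)) * (ε (yc x) - ‖e (f x) - e (yc x)‖) :=
          mul_nonneg (by linarith) (by linarith)
        have e2 : (0:ℝ) ≤ (t:ℝ) * (ε (yc x) - ‖e (g x) - e (yc x)‖) :=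
          mul_nonneg ht0 (by linarith)
        calc dist ((sg x t).2) ((i (yc x)).2)
            = ‖(1 - (t:ℝ)) • (e (f x) - e (yc x)) + (t:ℝ) • (e (g x) - e (yc x))‖ := henorm
          _ ≤ ‖(1 - (t:ℝ)) • (e (f x) - e (yc x))‖ + ‖(t:ℝ) • (e (g x) - e (yc x))‖ :=
              norm_add_le _ _
          _ = (1 - (t:ℝ)) * ‖e (f x) - e (yc x)‖ + (t:ℝ) * ‖e (g x) - e (yc x)‖ := by
              have n1 : ‖(1 - (t:ℝ)) • (e (f x) - e (yc x))‖
                  = |1 - (t:ℝ)| * ‖e (f x) - e (yc x)‖ := by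
                simpa using norm_smul (1 - (t:ℝ)) (e (f x) - e (yc x))
              have n2 : ‖(t:ℝ) • (e (g x) - e (yc x))‖
                  = |(t:ℝ)| * ‖e (g x) - e (yc x)‖ := by
                simpa using norm_smul ((t:ℝ)) (e (g x) - e (yc x))
              rw [n1, n2, abs_of_nonneg (by linarith : (0:ℝ) ≤ 1 - (t:ℝ)), abs_of_nonneg ht0]
          _ < 2 * ε (yc x) := by nlinarith [hεpos (yc x)]
    have hmemU : ∀ x t, sg x t ∈ U := fun x t =>
      hballU (yc x) (Metric.mem_ball.mpr (hdistb x t))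
    have hcf : Continuous fun p : X × unitInterval => e (f p.1) :=
      (he.continuous.comp hf.1).comp continuous_fst
    have hcg : Continuous fun p : X × unitInterval => e (g p.1) :=
      (he.continuous.comp hg.1).comp continuous_fst
    have hct : Continuous fun p : X × unitInterval => ((p.2 : ℝ)) :=
      continuous_subtype_val.comp continuous_snd
    refine ⟨fun p => r' ⟨sg p.1 p.2, hmemU p.1 p.2⟩, ?_, ?_, ?_, ?_, ?_, ?_⟩
    · exact hr'c.comp (Continuous.subtype_mk
        ((hπX.comp continuous_fst).prodMk (Continuous.subtype_mk
          (((continuous_const.sub hct).smul hcf).add (hct.smul hcg))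
          (fun p => hσC p.1 p.2))) (fun p => hmemU p.1 p.2))
    · intro x
      show r' ⟨sg x 0, hmemU x 0⟩ = f x
      have hσ0 : sg x 0 = i (f x) := by
        have h1 : πX x = πY (f x) := (hf.2 x).symm
        have h2 : (1 - ((0 : unitInterval) : ℝ)) • e (f x) + ((0 : unitInterval) : ℝ) • e (g x)
            = e (f x) := by norm_num
        show (πX x, (⟨(1 - ((0 : unitInterval) : ℝ)) • e (f x)
          + ((0 : unitInterval) : ℝ) • e (g x), hσC x 0⟩ : ↥C)) = i (f x)
        rw [h1]
        exact congrArg (fun c => (πY (f x), c)) (Subtype.ext h2)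
      have h0U : i (f x) ∈ U := hσ0 ▸ hmemU x 0
      calc r' ⟨sg x 0, hmemU x 0⟩ = r' ⟨i (f x), h0U⟩ := by congr 1; exact Subtype.ext hσ0
        _ = f x := hr'id _ _
    · intro x
      show r' ⟨sg x 1, hmemU x 1⟩ = g x
      have hσ1 : sg x 1 = i (g x) := by
        have h1 : πX x = πY (g x) := (hg.2 x).symm
        have h2 : (1 - ((1 : unitInterval) : ℝ)) • e (f x) + ((1 : unitInterval) : ℝ) • e (g x)
            = e (g x) := by norm_num
        show (πX x, (⟨(1 - ((1 : unitInterval) : ℝ)) • e (f x)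
          + ((1 : unitInterval) : ℝ) • e (g x), hσC x 1⟩ : ↥C)) = i (g x)
        rw [h1]
        exact congrArg (fun c => (πY (g x), c)) (Subtype.ext h2)
      have h1U : i (g x) ∈ U := hσ1 ▸ hmemU x 1
      calc r' ⟨sg x 1, hmemU x 1⟩ = r' ⟨i (g x), h1U⟩ := by congr 1; exact Subtype.ext hσ1
        _ = g x := hr'id _ _
    · intro x t
      exact hr'fp ⟨sg x t, hmemU x t⟩
    · intro x
      exact ⟨W (yc x), hW𝒰 (yc x),
        fun t => hballW (yc x) (sg x t) (hmemU x t) (Metric.mem_ball.mpr (hdistb x t))⟩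
    · intro a ha t
      show r' ⟨sg a t, hmemU a t⟩ = f a
      have hfg : f a = g a := hA a ha
      have hσa : sg a t = i (f a) := by
        have h1 : πX a = πY (f a) := (hf.2 a).symm
        have h2 : (1 - (t:ℝ)) • e (f a) + (t:ℝ) • e (g a) = e (f a) := by
          rw [← hfg]; module
        show (πX a, (⟨(1 - (t:ℝ)) • e (f a) + (t:ℝ) • e (g a), hσC a t⟩ : ↥C)) = i (f a)
        rw [h1]
        exact congrArg (fun c => (πY (f a), c)) (Subtype.ext h2)
      have haU : i (f a) ∈ U := hσa ▸ hmemU a t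
      calc r' ⟨sg a t, hmemU a t⟩ = r' ⟨i (f a), haU⟩ := by congr 1; exact Subtype.ext hσa
        _ = f a := hr'id _ _
end

section
/- Let Y be an ANR_{B0}-space, let A be a closed subspace of a metrizable space X over B0, let f, g : X → Y be f.p. maps, and let H : A × I → Y be an f.p. homotopy from f|A to g|A. Then there exist a neighbourhood U of A in X and an f.p. homotopy H̃ : U × I → Y from f|U to g|U such that H̃ restricted to A × I equals H. -/
open Set Topology TopologicalSpace unitInterval

universe u

section AuxiliaryForProp04

open Metric

universe v w



noncomputable def kurEmb {Y : Type u} [MetricSpace Y] (y₀ : Y) (y : Y) :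
    BoundedContinuousFunction Y ℝ :=
  ⟨⟨fun a => dist y a - dist y₀ a, by fun_prop⟩, by
    refine ⟨2 * dist y y₀, fun a b => ?_⟩
    have h1 : |dist y a - dist y₀ a| ≤ dist y y₀ := abs_dist_sub_le _ _ _
    have h2 : |dist y b - dist y₀ b| ≤ dist y y₀ := abs_dist_sub_le _ _ _
    simp only [Real.dist_eq, ContinuousMap.coe_mk]
    calc |dist y a - dist y₀ a - (dist y b - dist y₀ b)|
        ≤ |dist y a - dist y₀ a| + |dist y b - dist y₀ b| := abs_sub _ _
      _ ≤ 2 * dist y y₀ := by linarith⟩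

lemma kurEmb_apply {Y : Type u} [MetricSpace Y] (y₀ y a : Y) :
    kurEmb y₀ y a = dist y a - dist y₀ a := rfl

lemma kurEmb_isometry {Y : Type u} [MetricSpace Y] (y₀ : Y) : Isometry (kurEmb y₀) := by
  refine Isometry.of_dist_eq fun y y' => le_antisymm ?_ ?_
  · refine (BoundedContinuousFunction.dist_le dist_nonneg).2 fun a => ?_
    rw [kurEmb_apply, kurEmb_apply, Real.dist_eq]
    have h : dist y a - dist y₀ a - (dist y' a - dist y₀ a) = dist y a - dist y' a := by ring
    rw [h]
    exact abs_dist_sub_le _ _ _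
  · have h := BoundedContinuousFunction.dist_coe_le_dist (f := kurEmb y₀ y)
      (g := kurEmb y₀ y') y'
    rw [kurEmb_apply, kurEmb_apply, Real.dist_eq, dist_self] at h
    have h2 : |dist y y' - dist y₀ y' - (0 - dist y₀ y')| = dist y y' := by
      rw [show dist y y' - dist y₀ y' - ((0:ℝ) - dist y₀ y') = dist y y' by ring,
        abs_of_nonneg dist_nonneg]
    linarith

lemma kurEmb_dist_lower {Y : Type u} [MetricSpace Y] (y₀ : Y)
    {c : BoundedContinuousFunction Y ℝ} {ι : Type} {t : Finset ι} {w : ι → ℝ}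
    {z : ι → BoundedContinuousFunction Y ℝ}
    (hw0 : ∀ i ∈ t, 0 ≤ w i) (hw1 : ∑ i ∈ t, w i = 1)
    (hz : ∀ i ∈ t, z i ∈ Set.range (kurEmb y₀)) (hcm : t.centerMass w z = c)
    {i₀ : ι} (hi₀t : i₀ ∈ t) {ys : Y} (hys : kurEmb y₀ ys = z i₀) (y : Y) :
    w i₀ * dist ys y ≤ dist c (kurEmb y₀ y) := by
  have hc : c = ∑ i ∈ t, w i • z i := by rw [← hcm, Finset.centerMass_eq_of_sum_1 _ _ hw1]
  have h1 : c y = ∑ i ∈ t, w i * (z i y) := by rw [hc]; simp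
  have h2 : ∑ i ∈ t, w i * (z i y - kurEmb y₀ y y)
      = (∑ i ∈ t, w i * z i y) - (∑ i ∈ t, w i) * (kurEmb y₀ y y) := by
    rw [Finset.sum_mul, ← Finset.sum_sub_distrib]
    exact Finset.sum_congr rfl fun i _ => by ring
  have hval : c y - kurEmb y₀ y y = ∑ i ∈ t, w i * (z i y - kurEmb y₀ y y) := by
    rw [h1, h2, hw1, one_mul]
  have hnn : ∀ i ∈ t, 0 ≤ w i * (z i y - kurEmb y₀ y y) := by
    intro i hi
    obtain ⟨u, hu⟩ := hz i hi
    have : z i y - kurEmb y₀ y y = dist u y := by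
      rw [← hu, kurEmb_apply, kurEmb_apply, dist_self]; ring
    rw [this]
    exact mul_nonneg (hw0 i hi) dist_nonneg
  have hi₀val : w i₀ * (z i₀ y - kurEmb y₀ y y) = w i₀ * dist ys y := by
    have : z i₀ y - kurEmb y₀ y y = dist ys y := by
      rw [← hys, kurEmb_apply, kurEmb_apply, dist_self]; ring
    rw [this]
  have hsum : w i₀ * dist ys y ≤ ∑ i ∈ t, w i * (z i y - kurEmb y₀ y y) := by
    rw [← hi₀val]
    exact Finset.single_le_sum hnn hi₀t
  have habs : c y - kurEmb y₀ y y ≤ dist c (kurEmb y₀ y) := by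
    have := BoundedContinuousFunction.dist_coe_le_dist (f := c) (g := kurEmb y₀ y) y
    rw [Real.dist_eq] at this
    calc c y - kurEmb y₀ y y ≤ |c y - kurEmb y₀ y y| := le_abs_self _
      _ ≤ dist c (kurEmb y₀ y) := this
  linarith [hval ▸ habs, hsum]

/-- Wojdysławski: the image of the Kuratowski embedding is closed in its convex hull. -/
lemma kurEmb_closed_in_convexHull {Y : Type u} [MetricSpace Y] (y₀ : Y)
    {c : BoundedContinuousFunction Y ℝ} (hc : c ∈ convexHull ℝ (Set.range (kurEmb y₀)))
    (hcl : c ∈ closure (Set.range (kurEmb y₀))) : c ∈ Set.range (kurEmb y₀) := by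
  rw [convexHull_eq] at hc
  obtain ⟨ι, t, w, z, hw0, hw1, hz, hcm⟩ := hc
  have hex : ∃ i ∈ t, 0 < w i := by
    by_contra h
    push_neg at h
    have : ∑ i ∈ t, w i ≤ 0 := Finset.sum_nonpos fun i hi => h i hi
    linarith
  obtain ⟨i₀, hi₀t, hi₀⟩ := hex
  obtain ⟨ys, hys⟩ := hz i₀ hi₀t
  have key : ∀ y : Y, w i₀ * dist ys y ≤ dist c (kurEmb y₀ y) :=
    kurEmb_dist_lower y₀ hw0 hw1 hz hcm hi₀t hys
  have hzero : dist c (kurEmb y₀ ys) = 0 := by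
    by_contra h
    have hpos : 0 < dist c (kurEmb y₀ ys) := lt_of_le_of_ne dist_nonneg (Ne.symm h)
    set d := dist c (kurEmb y₀ ys) with hd
    have hk : (0:ℝ) < 1 + 1 / w i₀ := by positivity
    obtain ⟨b, ⟨u, hu⟩, hb⟩ := Metric.mem_closure_iff.1 hcl (d / (2 * (1 + 1 / w i₀)))
      (by positivity)
    rw [← hu] at hb
    have h1 : w i₀ * dist ys u ≤ dist c (kurEmb y₀ u) := key u
    have h2 : dist c (kurEmb y₀ ys) ≤ dist c (kurEmb y₀ u) + dist (kurEmb y₀ u) (kurEmb y₀ ys) :=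
      dist_triangle _ _ _
    have h3 : dist (kurEmb y₀ u) (kurEmb y₀ ys) = dist u ys := (kurEmb_isometry y₀).dist_eq u ys
    have h4 : dist u ys = dist ys u := dist_comm _ _
    have h5 : dist ys u ≤ dist c (kurEmb y₀ u) / w i₀ := by
      rw [le_div_iff₀ hi₀]
      linarith [h1]
    have h6 : d ≤ dist c (kurEmb y₀ u) * (1 + 1 / w i₀) := by
      have : dist c (kurEmb y₀ u) / w i₀ = dist c (kurEmb y₀ u) * (1 / w i₀) := by ring
      rw [hd]
      calc dist c (kurEmb y₀ ys) ≤ dist c (kurEmb y₀ u) + dist ys u := by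
            rw [← h4, ← h3]; exact h2
        _ ≤ dist c (kurEmb y₀ u) + dist c (kurEmb y₀ u) / w i₀ := by linarith
        _ = dist c (kurEmb y₀ u) * (1 + 1 / w i₀) := by ring
    have h7 : dist c (kurEmb y₀ u) * (1 + 1 / w i₀) < d / (2 * (1 + 1 / w i₀)) * (1 + 1 / w i₀) :=
      mul_lt_mul_of_pos_right hb hk
    have h8 : d / (2 * (1 + 1 / w i₀)) * (1 + 1 / w i₀) = d / 2 := by
      field_simp
    linarith
  exact ⟨ys, (eq_of_dist_eq_zero hzero).symm⟩



/-- Dugundji-type extension: a continuous map on a closed subset of a metric space with values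
in a normed real vector space extends continuously with values in the convex hull of its range. -/
lemma dugundji_extension_s3 {Z : Type v} [MetricSpace Z] {E : Type w} [NormedAddCommGroup E]
    [NormedSpace ℝ E] {T : Set Z} (hT : IsClosed T) (hne : T.Nonempty)
    {φ : T → E} (hφ : Continuous φ) :
    ∃ Φ : Z → E, Continuous Φ ∧ (∀ t : T, Φ t = φ t) ∧
      ∀ z, Φ z ∈ convexHull ℝ (Set.range φ) := by
  classical
  have hO : IsOpen Tᶜ := hT.isOpen_compl
  set r : Z → ℝ := fun z => infDist z T with hr
  have hrpos : ∀ i : ↥Tᶜ, 0 < r i := fun i => (hT.notMem_iff_infDist_pos hne).1 i.2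
  set U : ↥Tᶜ → Set ↥Tᶜ := fun i => {w | dist (w : Z) (i : Z) < r i / 4} with hU
  have hUopen : ∀ i, IsOpen (U i) := fun i =>
    isOpen_lt (by fun_prop) continuous_const
  have hUcover : (univ : Set ↥Tᶜ) ⊆ ⋃ i, U i := fun i _ =>
    mem_iUnion.2 ⟨i, by simp [hU, hrpos i]⟩
  obtain ⟨pou, hpou⟩ := PartitionOfUnity.exists_isSubordinate isClosed_univ U hUopen hUcover
  have hch : ∀ i : ↥Tᶜ, ∃ t ∈ T, dist (i : Z) t < 2 * r i :=
    fun i => (Metric.infDist_lt_iff hne).1 (by linarith [hrpos i])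
  choose tp htpT htpd using hch
  set c : ↥Tᶜ → E := fun i => φ ⟨tp i, htpT i⟩ with hcdef
  set F : ↥Tᶜ → E := fun w => ∑ᶠ i, pou i w • c i with hF
  have hFcont : Continuous F :=
    hpou.continuous_finsum_smul hUopen fun i => continuousOn_const
  -- key estimate
  have hFest : ∀ (t₀ : Z) (ht₀ : t₀ ∈ T) (δ : ℝ), 0 < δ → ∀ (w : ↥Tᶜ), dist (w : Z) t₀ < δ →
      ∀ ε : ℝ, (∀ t' : T, dist (t' : Z) t₀ < 4 * δ → dist (φ t') (φ ⟨t₀, ht₀⟩) ≤ ε) →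
      dist (F w) (φ ⟨t₀, ht₀⟩) ≤ ε := by
    intro t₀ ht₀ δ hδ w hw ε hε
    have hmem : F w ∈ Metric.closedBall (φ ⟨t₀, ht₀⟩) ε := by
      refine pou.finsum_smul_mem_convex (g := fun i (_ : ↥Tᶜ) => c i)
        (t := Metric.closedBall (φ ⟨t₀, ht₀⟩) ε) (mem_univ w) (fun i hi => ?_)
        (convex_closedBall _ _)
      have hwU : w ∈ U i := hpou i (subset_tsupport _ hi)
      have h1 : dist (w : Z) (i : Z) < r i / 4 := hwU
      have h2 : r i ≤ dist (i : Z) t₀ := infDist_le_dist_of_mem ht₀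
      have h3 : dist (i : Z) t₀ ≤ dist (i : Z) (w : Z) + dist (w : Z) t₀ := dist_triangle _ _ _
      have h4 : dist (i : Z) (w : Z) = dist (w : Z) (i : Z) := dist_comm _ _
      have h5 : r i < 4 * δ / 3 := by linarith
      have h6 : dist (tp i) t₀ ≤ dist (tp i) (i : Z) + dist (i : Z) (w : Z) + dist (w : Z) t₀ :=
        dist_triangle4 _ _ _ _
      have h7 : dist (tp i) (i : Z) = dist (i : Z) (tp i) := dist_comm _ _
      have h8 : dist (tp i) t₀ < 4 * δ := by linarith [htpd i]
      exact Metric.mem_closedBall.2 (hε ⟨tp i, htpT i⟩ h8)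
    exact Metric.mem_closedBall.1 hmem
  refine ⟨fun z => if hz : z ∈ T then φ ⟨z, hz⟩ else F ⟨z, hz⟩, ?_, ?_, ?_⟩
  · rw [continuous_iff_continuousAt]
    intro z
    by_cases hz : z ∈ T
    · rw [Metric.continuousAt_iff]
      intro ε hε
      obtain ⟨δ₁, hδ₁, hδ₁p⟩ := Metric.continuous_iff.1 hφ ⟨z, hz⟩ (ε / 2) (by linarith)
      refine ⟨δ₁ / 4, by linarith, fun x hx => ?_⟩
      have hzeq : (if hz' : z ∈ T then φ ⟨z, hz'⟩ else F ⟨z, hz'⟩) = φ ⟨z, hz⟩ := dif_pos hz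
      rw [hzeq]
      by_cases hxT : x ∈ T
      · rw [dif_pos hxT]
        have : dist (⟨x, hxT⟩ : T) (⟨z, hz⟩ : T) < δ₁ := by
          rw [Subtype.dist_eq]; simp only; linarith
        linarith [hδ₁p _ this]
      · rw [dif_neg hxT]
        have := hFest z hz (δ₁ / 4) (by linarith) ⟨x, hxT⟩ hx (ε / 2) ?_
        · linarith
        · intro t' ht'
          have : dist t' (⟨z, hz⟩ : T) < δ₁ := by
            rw [Subtype.dist_eq]; simp only; linarith
          linarith [hδ₁p _ this]
    · have hres : Tᶜ.domRestrict (fun z => if hz : z ∈ T then φ ⟨z, hz⟩ else F ⟨z, hz⟩) = F := by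
        funext w
        exact dif_neg w.2
      have : ContinuousOn (fun z => if hz : z ∈ T then φ ⟨z, hz⟩ else F ⟨z, hz⟩) Tᶜ :=
        continuousOn_iff_continuous_restrict.2 (by rw [hres]; exact hFcont)
      exact this.continuousAt (hO.mem_nhds hz)
  · intro t
    exact dif_pos t.2
  · intro z
    show (if hz : z ∈ T then φ ⟨z, hz⟩ else F ⟨z, hz⟩) ∈ convexHull ℝ (Set.range φ)
    by_cases hz : z ∈ T
    · rw [dif_pos hz]
      exact subset_convexHull ℝ _ (mem_range_self _)
    · rw [dif_neg hz]
      exact pou.finsum_smul_mem_convex (g := fun i (_ : ↥Tᶜ) => c i) (mem_univ _)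
        (fun i _ => subset_convexHull ℝ _ (mem_range_self _)) (convex_convexHull _ _)
set_option synthInstance.maxHeartbeats 1000000 in
lemma fiberANR_isFiberANE {B0 : Type u} [TopologicalSpace B0] [MetrizableSpace B0]
    {Y : Type u} [TopologicalSpace Y] {πY : Y → B0} (hY : IsFiberANR B0 Y πY) :
    IsFiberANE B0 Y πY := by
  classical
  obtain ⟨hYmet, hπY, hANR⟩ := hY
  refine ⟨hYmet, hπY, ?_⟩
  intro Z _ hZmet πZ hπZ T hT K hK hKfp
  by_cases hTne : T.Nonempty
  swap
  · rw [Set.not_nonempty_iff_eq_empty] at hTne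
    subst hTne
    refine ⟨∅, by simp [nhdsSet_empty], fun u => (Set.notMem_empty _ u.2).elim, ?_, ?_, ?_⟩
    · exact continuous_iff_continuousAt.2 fun u => (Set.notMem_empty _ u.2).elim
    · exact fun u => (Set.notMem_empty _ u.2).elim
    · exact fun a ha => (Set.notMem_empty _ ha).elim
  obtain ⟨t₀, ht₀⟩ := hTne
  haveI := hYmet
  haveI := hZmet
  letI : MetricSpace Z := TopologicalSpace.metrizableSpaceMetric Z
  letI : MetricSpace Y := TopologicalSpace.metrizableSpaceMetric Y
  set y₀ : Y := K ⟨t₀, ht₀⟩ with hy₀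
  set e : Y → BoundedContinuousFunction Y ℝ := kurEmb y₀ with he
  have heiso : Isometry e := kurEmb_isometry y₀
  have heemb : IsEmbedding e := heiso.isEmbedding
  set C : Set (BoundedContinuousFunction Y ℝ) := convexHull ℝ (Set.range e) with hC
  have heC : ∀ y, e y ∈ C := fun y => subset_convexHull ℝ _ (Set.mem_range_self y)
  set e' : Y → ↥C := fun y => (⟨e y, heC y⟩ : ↥C) with he'
  have he'emb : IsEmbedding e' := heemb.codRestrict C heC
  set i : Y → B0 × ↥C := fun y => (πY y, e' y) with hi
  have hicont : Continuous i := hπY.prodMk he'emb.continuous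
  have hiind : IsInducing i :=
    IsInducing.of_comp hicont continuous_snd he'emb.toIsInducing
  have hiinj : Function.Injective i := fun a b hab =>
    heemb.injective (congrArg (fun p => (p.2 : BoundedContinuousFunction Y ℝ)) hab)
  have hiemb : IsEmbedding i := ⟨hiind, hiinj⟩
  haveI : FirstCountableTopology B0 := inferInstance
  haveI : FirstCountableTopology ↥C := inferInstance
  haveI : SequentialSpace (B0 × ↥C) := inferInstance
  have hclosed : IsClosed (Set.range i) := by
    refine IsSeqClosed.isClosed ?_
    intro u p hu hup
    choose y hy using hu
    have hup1 : Filter.Tendsto (fun n => πY (y n)) Filter.atTop (nhds p.1) := by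
      have h := (continuous_fst.tendsto p).comp hup
      refine h.congr fun n => ?_
      show (u n).1 = πY (y n)
      rw [← hy n]
    have hup2 : Filter.Tendsto (fun n => e (y n)) Filter.atTop (nhds (p.2 : BoundedContinuousFunction Y ℝ)) := by
      have h := (continuous_subtype_val.tendsto p.2).comp ((continuous_snd.tendsto p).comp hup)
      refine h.congr fun n => ?_
      show ((u n).2 : BoundedContinuousFunction Y ℝ) = e (y n)
      rw [← hy n]
    have hp2C : (p.2 : BoundedContinuousFunction Y ℝ) ∈ C := p.2.2
    have hp2cl : (p.2 : BoundedContinuousFunction Y ℝ) ∈ closure (Set.range e) :=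
      mem_closure_of_tendsto hup2 (Filter.Eventually.of_forall fun n => Set.mem_range_self _)
    obtain ⟨ys, hys⟩ := kurEmb_closed_in_convexHull y₀ hp2C hp2cl
    have hyconv : Filter.Tendsto y Filter.atTop (nhds ys) := by
      rw [tendsto_iff_dist_tendsto_zero]
      have hys' : e ys = (p.2 : BoundedContinuousFunction Y ℝ) := hys
      have : Filter.Tendsto (fun n => dist (e (y n)) (e ys)) Filter.atTop (nhds 0) := by
        rw [hys']
        exact tendsto_iff_dist_tendsto_zero.1 hup2
      refine this.congr fun n => ?_
      rw [heiso.dist_eq]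
    have h1 : p.1 = πY ys :=
      tendsto_nhds_unique hup1 ((hπY.tendsto ys).comp hyconv)
    have h2 : p.2 = e' ys := by
      refine Subtype.ext ?_
      exact hys.symm
    exact ⟨ys, Prod.ext h1.symm h2.symm⟩
  have hiclemb : IsClosedEmbedding i := ⟨hiemb, hclosed⟩
  obtain ⟨U', hU', r, hrcont, hrr, hrfp, hrfix⟩ :=
    hANR (B0 × ↥C) inferInstance inferInstance Prod.fst continuous_fst i hiclemb fun y => rfl
  -- Dugundji extension of `e ∘ K`
  obtain ⟨Φ₀, hΦ₀c, hΦ₀T, hΦ₀conv⟩ :=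
    dugundji_extension_s3 (φ := fun t : ↥T => e (K t)) hT ⟨t₀, ht₀⟩ (heemb.continuous.comp hK)
  have hΦ₀C : ∀ z, Φ₀ z ∈ C := by
    intro z
    refine convexHull_mono ?_ (hΦ₀conv z)
    rintro - ⟨t, rfl⟩
    exact Set.mem_range_self _
  set Φ : Z → ↥C := fun z => (⟨Φ₀ z, hΦ₀C z⟩ : ↥C) with hΦ
  have hΦc : Continuous Φ := hΦ₀c.subtype_mk _
  set Kt : Z → B0 × ↥C := fun z => (πZ z, Φ z) with hKt
  have hKtc : Continuous Kt := hπZ.prodMk hΦc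
  have hKtT : ∀ t : ↥T, Kt t = i (K t) := by
    intro t
    refine Prod.ext ?_ (Subtype.ext ?_)
    · exact (hKfp t).symm
    · exact hΦ₀T t
  set V : Set Z := Kt ⁻¹' U' with hV
  have hVmem : V ∈ nhdsSet T := by
    rw [mem_nhdsSet_iff_forall]
    intro z hz
    have h1 : Kt z ∈ Set.range i := by
      rw [hKtT ⟨z, hz⟩]
      exact Set.mem_range_self _
    exact hKtc.continuousAt.preimage_mem_nhds (mem_nhdsSet_iff_forall.1 hU' _ h1)
  set homeo : Y ≃ₜ ↥(Set.range i) := hiemb.toHomeomorph with hhomeo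
  set g : ↥V → Y := fun v => homeo.symm ⟨r ⟨Kt v, v.2⟩, hrr _⟩ with hg
  have hig : ∀ v : ↥V, i (g v) = r ⟨Kt v, v.2⟩ := by
    intro v
    have := homeo.apply_symm_apply ⟨r ⟨Kt v, v.2⟩, hrr _⟩
    exact congrArg Subtype.val this
  refine ⟨V, hVmem, g, ?_, ?_, ?_⟩
  · refine homeo.symm.continuous.comp (Continuous.subtype_mk ?_ _)
    exact hrcont.comp ((hKtc.comp continuous_subtype_val).subtype_mk _)
  · intro v
    have h1 : πY (g v) = (i (g v)).1 := rfl
    rw [h1, hig v, hrfp ⟨Kt v, v.2⟩]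
  · intro a ha hu
    have h1 : Kt a ∈ Set.range i := by
      rw [hKtT ⟨a, ha⟩]; exact Set.mem_range_self _
    have h2 : r ⟨Kt a, hu⟩ = Kt a := hrfix ⟨Kt a, hu⟩ h1
    refine homeo.injective ?_
    refine Subtype.ext ?_
    show i (g ⟨a, hu⟩) = i (K ⟨a, ha⟩)
    rw [hig ⟨a, hu⟩]
    show r ⟨Kt a, hu⟩ = i (K ⟨a, ha⟩)
    rw [h2, hKtT ⟨a, ha⟩]


lemma myContinuousOn_union_isClosed {X Y : Type*} [TopologicalSpace X] [TopologicalSpace Y]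
    {f : X → Y} {s t : Set X} (hs : IsClosed s) (ht : IsClosed t)
    (hfs : ContinuousOn f s) (hft : ContinuousOn f t) : ContinuousOn f (s ∪ t) := by
  intro x hx
  have h1 : ContinuousWithinAt f s x := by
    by_cases h : x ∈ s
    · exact hfs x h
    · exact continuousWithinAt_of_notMem_closure (by rwa [hs.closure_eq])
  have h2 : ContinuousWithinAt f t x := by
    by_cases h : x ∈ t
    · exact hft x h
    · exact continuousWithinAt_of_notMem_closure (by rwa [ht.closure_eq])
  exact h1.union h2


end AuxiliaryForProp04

/-- Proposition 0.4: homotopy extension for `ANR_{B0}`-spaces.  An f.p. homotopy on a closed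
subset `A` of a metrizable space `X` over `B0` connecting `f|A` and `g|A` extends, over some
neighbourhood `U` of `A`, to an f.p. homotopy connecting `f|U` and `g|U`. -/
theorem fiberANR_homotopy_extension (B0 : Type u) [TopologicalSpace B0] [MetrizableSpace B0]
    (Y : Type u) [TopologicalSpace Y] (πY : Y → B0) (hY : IsFiberANR B0 Y πY)
    (X : Type u) [TopologicalSpace X] [MetrizableSpace X] (πX : X → B0) (hπX : Continuous πX)
    (A : Set X) (hA : IsClosed A)
    (f g : X → Y) (hf : IsFPMap πX πY f) (hg : IsFPMap πX πY g)
    (H : A × unitInterval → Y) (hH : Continuous H)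
    (hH0 : ∀ a : A, H (a, 0) = f a) (hH1 : ∀ a : A, H (a, 1) = g a)
    (hHfp : ∀ (a : A) (t : unitInterval), πY (H (a, t)) = πX a) :
    ∃ U : Set X, U ∈ nhdsSet A ∧
      ∃ Ht : U × unitInterval → Y, Continuous Ht ∧
        (∀ u : U, Ht (u, 0) = f u) ∧ (∀ u : U, Ht (u, 1) = g u) ∧
        (∀ (u : U) (t : unitInterval), πY (Ht (u, t)) = πX u) ∧
        ∀ (a : A) (h : (a : X) ∈ U) (t : unitInterval), Ht (⟨a, h⟩, t) = H (a, t) := by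
  classical
  set Z := X × unitInterval with hZ
  set πZ : Z → B0 := fun p => πX p.1 with hπZ
  have hπZc : Continuous πZ := hπX.comp continuous_fst
  set T1 : Set Z := Prod.fst ⁻¹' A with hT1
  set T2 : Set Z := Prod.snd ⁻¹' {(0 : unitInterval)} with hT2
  set T3 : Set Z := Prod.snd ⁻¹' {(1 : unitInterval)} with hT3
  set T : Set Z := T1 ∪ (T2 ∪ T3) with hTdef
  have hT1c : IsClosed T1 := hA.preimage continuous_fst
  have hT2c : IsClosed T2 := (isClosed_singleton).preimage continuous_snd
  have hT3c : IsClosed T3 := (isClosed_singleton).preimage continuous_snd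
  have hTc : IsClosed T := hT1c.union (hT2c.union hT3c)
  set K' : Z → Y := fun p =>
    if hx : p.1 ∈ A then H (⟨p.1, hx⟩, p.2) else
      if (p.2 : ℝ) ≤ 1 / 2 then f p.1 else g p.1 with hK'
  have hK'A : ∀ (p : Z) (hp : p.1 ∈ A), K' p = H (⟨p.1, hp⟩, p.2) := fun p hp => dif_pos hp
  have hK'0 : ∀ p : Z, p.2 = 0 → K' p = f p.1 := by
    intro p hp
    by_cases hx : p.1 ∈ A
    · rw [hK'A p hx, hp]
      exact hH0 ⟨p.1, hx⟩
    · simp only [hK']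
      rw [dif_neg hx, if_pos]
      rw [hp]
      norm_num
  have hK'1 : ∀ p : Z, p.2 = 1 → K' p = g p.1 := by
    intro p hp
    by_cases hx : p.1 ∈ A
    · rw [hK'A p hx, hp]
      exact hH1 ⟨p.1, hx⟩
    · simp only [hK']
      rw [dif_neg hx, if_neg]
      rw [hp]
      norm_num
  have hK'contT : ContinuousOn K' T := by
    refine myContinuousOn_union_isClosed hT1c (hT2c.union hT3c) ?_ ?_
    · rw [continuousOn_iff_continuous_restrict]
      have : T1.domRestrict K' = fun p : ↥T1 => H (⟨p.val.1, p.2⟩, p.val.2) := by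
        funext p
        exact hK'A p.val p.2
      rw [this]
      refine hH.comp (Continuous.prodMk ?_ ?_)
      · exact (continuous_fst.comp continuous_subtype_val).subtype_mk _
      · exact continuous_snd.comp continuous_subtype_val
    · refine myContinuousOn_union_isClosed hT2c hT3c ?_ ?_
      · refine ContinuousOn.congr ((hf.1.comp continuous_fst).continuousOn) ?_
        intro p hp
        exact hK'0 p hp
      · refine ContinuousOn.congr ((hg.1.comp continuous_fst).continuousOn) ?_
        intro p hp
        exact hK'1 p hp
  set K : ↥T → Y := T.restrict K' with hKdef
  have hKc : Continuous K := continuousOn_iff_continuous_restrict.1 hK'contT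
  have hKfp : ∀ p : ↥T, πY (K p) = πZ p.val := by
    intro p
    show πY (K' p.val) = πX p.val.1
    by_cases hx : p.val.1 ∈ A
    · rw [hK'A p.val hx]
      exact hHfp ⟨p.val.1, hx⟩ p.val.2
    · show πY (K' p.val) = _
      simp only [hK']
      rw [dif_neg hx]
      by_cases ht : ((p.val.2 : ℝ)) ≤ 1 / 2
      · rw [if_pos ht]; exact hf.2 _
      · rw [if_neg ht]; exact hg.2 _
  obtain ⟨V, hV, L, hLc, hLfp, hLT⟩ :=
    (fiberANR_isFiberANE hY).2.2 Z inferInstance inferInstance πZ hπZc T hTc K hKc hKfp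
  set V' : Set Z := interior V with hV'
  have hV'open : IsOpen V' := isOpen_interior
  have hTV' : T ⊆ V' := subset_interior_iff_mem_nhdsSet.2 hV
  set U : Set X := {x : X | ∀ t : unitInterval, (x, t) ∈ V'} with hU
  have hUeq : U = (Prod.fst '' V'ᶜ)ᶜ := by
    ext x
    simp only [hU, Set.mem_setOf_eq, Set.mem_compl_iff, Set.mem_image, Prod.exists, not_exists]
    constructor
    · rintro h a b ⟨hab, rfl⟩
      exact hab (h b)
    · intro h t
      by_contra hc
      exact h x t ⟨hc, rfl⟩
  have hUopen : IsOpen U := by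
    rw [hUeq]
    exact (isClosedMap_fst_of_compactSpace _ hV'open.isClosed_compl).isOpen_compl
  have hAU : A ⊆ U := fun a ha t => hTV' (Or.inl ha)
  have hmemV : ∀ (x : ↥U) (t : unitInterval), ((x : X), t) ∈ V :=
    fun x t => interior_subset (x.2 t)
  refine ⟨U, hUopen.mem_nhdsSet.2 hAU, fun p => L ⟨((p.1 : X), p.2), hmemV p.1 p.2⟩,
    ?_, ?_, ?_, ?_, ?_⟩
  · refine hLc.comp (Continuous.subtype_mk ?_ _)
    exact (continuous_subtype_val.comp continuous_fst).prodMk continuous_snd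
  · intro u
    have hmT : (((u : X), (0 : unitInterval)) : Z) ∈ T := Or.inr (Or.inl rfl)
    show L ⟨((u : X), (0 : unitInterval)), hmemV u 0⟩ = f (u : X)
    rw [hLT _ hmT (hmemV u 0)]
    exact hK'0 _ rfl
  · intro u
    have hmT : (((u : X), (1 : unitInterval)) : Z) ∈ T := Or.inr (Or.inr rfl)
    show L ⟨((u : X), (1 : unitInterval)), hmemV u 1⟩ = g (u : X)
    rw [hLT _ hmT (hmemV u 1)]
    exact hK'1 _ rfl
  · intro u t
    exact hLfp ⟨((u : X), t), hmemV u t⟩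
  · intro a ha t
    have hmT : (((a : X), t) : Z) ∈ T := Or.inl a.2
    show L ⟨((a : X), t), hmemV ⟨(a : X), ha⟩ t⟩ = H (a, t)
    rw [hLT _ hmT (hmemV ⟨(a : X), ha⟩ t)]
    show K' ((a : X), t) = H (a, t)
    rw [hK'A _ a.2]
end
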